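/- arXiv:2010.08988 — 3 statements merged into one kernel-verified Lean document; each statement's English description precedes it below -/
import Mathlib

section
/- Let E be a finite set and 𝓕 a family of subsets of E. Then exactly one of the following statements holds: (i) there is a subset J ⊆ E such that |F ∩ J| is odd for every F ∈ 𝓕; (ii) there are sets F₁, …, F_k ∈ 𝓕 (not necessarily distinct), where k is odd, whose symmetric difference F₁ + ⋯ + F_k is empty. -/
open Relation

/-! ## Finite directed multigraphs -/

/-- A finite directed multigraph: finite vertex and edge types together with
tail and head maps (loops and parallel/anti-parallel edges are allowed). -/
structure MultiDigraph : Type 1 where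
  V : Type
  E : Type
  [fv : Fintype V]
  [fe : Fintype E]
  [dv : DecidableEq V]
  [de : DecidableEq E]
  tail : E → V
  head : E → V

attribute [instance] MultiDigraph.fv MultiDigraph.fe MultiDigraph.dv MultiDigraph.de

namespace MultiDigraph

variable (D : MultiDigraph)

/-- The set of edges crossing the partition `(X, Xᶜ)` of the vertex set. -/
def cutAt (X : Set D.V) : Set D.E :=
  {e | (D.tail e ∈ X ∧ D.head e ∉ X) ∨ (D.tail e ∉ X ∧ D.head e ∈ X)}

/-- A cut: a nonempty set of edges of the form `cutAt X`. -/
def IsCut (S : Set D.E) : Prop := S.Nonempty ∧ ∃ X : Set D.V, S = D.cutAt X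

/-- A bond: a cut containing no other cut properly. -/
def IsBond (S : Set D.E) : Prop := D.IsCut S ∧ ∀ S', D.IsCut S' → S' ⊆ S → S' = S

/-- A directed cut: a nonempty cut `cutAt X` such that no edge enters `X`. -/
def IsDirectedCut (S : Set D.E) : Prop :=
  S.Nonempty ∧ ∃ X : Set D.V, S = D.cutAt X ∧ ∀ e : D.E, ¬(D.tail e ∉ X ∧ D.head e ∈ X)

/-- A directed bond: a bond which is a directed cut. -/
def IsDirectedBond (S : Set D.E) : Prop := D.IsBond S ∧ D.IsDirectedCut S

/-- An odd dijoin: an edge set meeting every directed bond an odd number of times. -/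
def IsOddDijoin (J : Set D.E) : Prop := ∀ S : Set D.E, D.IsDirectedBond S → Odd (J ∩ S).ncard

def HasOddDijoin : Prop := ∃ J : Set D.E, D.IsOddDijoin J

/-- One-step relation used for weak connectivity of the subgraph spanned by `A`:
`x` and `y` are joined by an edge of `A`. -/
def touchRel (A : Set D.E) : D.V → D.V → Prop :=
  fun x y => ∃ e ∈ A, D.tail e = x ∧ D.head e = y

/-- Contraction `D/A`: delete the edges of `A` and identify each weak component of `D[A]`. -/
noncomputable def contract (A : Set D.E) : MultiDigraph :=
  letI s := EqvGen.setoid (D.touchRel A)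
  { V := Quotient s
    E := {e : D.E // e ∉ A}
    fv := Fintype.ofFinite _
    fe := Fintype.ofFinite _
    dv := Classical.decEq _
    de := Classical.decEq _
    tail := fun e => Quotient.mk s (D.tail e.1)
    head := fun e => Quotient.mk s (D.head e.1) }

/-- A step of a directed walk. -/
def dstep : D.V → D.V → Prop := fun a b => ∃ e : D.E, D.tail e = a ∧ D.head e = b

/-- A step of a directed walk avoiding a fixed edge `e₀`. -/
def dstepAvoiding (e₀ : D.E) : D.V → D.V → Prop :=
  fun a b => ∃ e : D.E, e ≠ e₀ ∧ D.tail e = a ∧ D.head e = b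

/-- An edge is deletable if it is not a loop and there is a directed path from its tail
to its head not using it. -/
def Deletable (e : D.E) : Prop :=
  D.tail e ≠ D.head e ∧ ReflTransGen (D.dstepAvoiding e) (D.tail e) (D.head e)

/-- Deleting one edge. -/
noncomputable def deleteEdge (e : D.E) : MultiDigraph where
  V := D.V
  E := {f : D.E // f ≠ e}
  fv := D.fv
  fe := Fintype.ofFinite _
  dv := D.dv
  de := Classical.decEq _
  tail := fun f => D.tail f.1
  head := fun f => D.head f.1

/-- An isolated vertex. -/
def Isolated (v : D.V) : Prop := ∀ e : D.E, D.tail e ≠ v ∧ D.head e ≠ v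

/-- Deleting an isolated vertex. -/
noncomputable def deleteVertex (v : D.V) (h : D.Isolated v) : MultiDigraph where
  V := {u : D.V // u ≠ v}
  E := D.E
  fv := Fintype.ofFinite _
  fe := D.fe
  dv := Classical.decEq _
  de := D.de
  tail := fun e => ⟨D.tail e, (h e).1⟩
  head := fun e => ⟨D.head e, (h e).2⟩

/-- A digraph is acyclic if it has no directed cycle. -/
def Acyclic : Prop := ∀ a b : D.V, D.dstep a b → ¬ ReflTransGen D.dstep b a

/-- A step of an undirected walk. -/
def ustep : D.V → D.V → Prop :=
  fun a b => ∃ e : D.E, (D.tail e = a ∧ D.head e = b) ∨ (D.tail e = b ∧ D.head e = a)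

/-- Weak connectivity. -/
def WeaklyConnected : Prop := ∀ a b : D.V, ReflTransGen D.ustep a b

/-- A step of an undirected walk avoiding the vertex `v`. -/
def ustepAvoiding (v : D.V) : D.V → D.V → Prop :=
  fun a b => a ≠ v ∧ b ≠ v ∧ D.ustep a b

/-- The underlying multigraph is 2-vertex-connected. -/
def TwoConnected : Prop :=
  3 ≤ Fintype.card D.V ∧ D.WeaklyConnected ∧
    ∀ v a b : D.V, a ≠ v → b ≠ v → ReflTransGen (D.ustepAvoiding v) a b

/-- `D` is an oriented graph: no loops and no pair of parallel or anti-parallel edges. -/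
def Oriented : Prop :=
  (∀ e : D.E, D.tail e ≠ D.head e) ∧
    ∀ e f : D.E, e ≠ f → ({D.tail e, D.head e} : Set D.V) ≠ {D.tail f, D.head f}

/-- `D` is transitively reduced: no edge of `D` is deletable. -/
def TransitivelyReduced : Prop := ∀ e : D.E, ¬ D.Deletable e

end MultiDigraph

/-! ## Digraph isomorphism -/

/-- An isomorphism of directed multigraphs. -/
structure DigraphIso (D₁ D₂ : MultiDigraph) where
  vmap : D₁.V ≃ D₂.V
  emap : D₁.E ≃ D₂.E
  tail_eq : ∀ e, D₂.tail (emap e) = vmap (D₁.tail e)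
  head_eq : ∀ e, D₂.head (emap e) = vmap (D₁.head e)

def IsIsomorphic (D₁ D₂ : MultiDigraph) : Prop := Nonempty (DigraphIso D₁ D₂)

/-! ## Cut minors -/

/-- A single cut-minor step: contraction of an edge, deletion of a deletable edge, or
deletion of an isolated vertex. -/
inductive CutMinorStep : MultiDigraph → MultiDigraph → Prop
  | contractEdge (D : MultiDigraph) (e : D.E) : CutMinorStep (D.contract {e}) D
  | delEdge (D : MultiDigraph) (e : D.E) (h : D.Deletable e) : CutMinorStep (D.deleteEdge e) D
  | delVertex (D : MultiDigraph) (v : D.V) (h : D.Isolated v) :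
      CutMinorStep (D.deleteVertex v h) D

/-- `D₁` is a cut minor of `D₂`. -/
def IsCutMinor (D₁ D₂ : MultiDigraph) : Prop := ReflTransGen CutMinorStep D₁ D₂

/-- A proper cut minor: a cut minor which is not isomorphic to the digraph itself. -/
def IsProperCutMinor (D₁ D₂ : MultiDigraph) : Prop :=
  IsCutMinor D₁ D₂ ∧ ¬ IsIsomorphic D₁ D₂

/-- A minimal obstruction: a digraph without an odd dijoin all of whose proper cut minors
have an odd dijoin. -/
def MinimalObstruction (D : MultiDigraph) : Prop :=
  ¬ D.HasOddDijoin ∧ ∀ D' : MultiDigraph, IsProperCutMinor D' D → D'.HasOddDijoin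

/-! ## Cycles and forests in the underlying multigraph -/

namespace MultiDigraph

variable (D : MultiDigraph)

/-- `X : D.E → SignType` is the signed incidence vector of a cycle of the underlying
multigraph of `D`, signs recording forward/backward edges of a cyclic traversal. -/
def IsSignedCycle (X : D.E → SignType) : Prop :=
  ∃ n : ℕ, 0 < n ∧ ∃ (v : ZMod n → D.V) (ed : ZMod n → D.E) (dir : ZMod n → Bool),
    Function.Injective v ∧ Function.Injective ed ∧
    (∀ i, (dir i = true → D.tail (ed i) = v i ∧ D.head (ed i) = v (i + 1)) ∧
      (dir i = false → D.tail (ed i) = v (i + 1) ∧ D.head (ed i) = v i)) ∧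
    (∀ i, X (ed i) = if dir i then 1 else -1) ∧
    (∀ f, (∀ i, ed i ≠ f) → X f = 0)

/-- The sub-multigraph spanned by `A` is a forest: it contains no cycle. -/
def IsForestOn (A : Set D.E) : Prop :=
  ¬ ∃ X : D.E → SignType, D.IsSignedCycle X ∧ ∀ e : D.E, X e ≠ 0 → e ∈ A

end MultiDigraph

/-! ## The cut space over 𝔽₂ -/

/-- Indicator vector of a set, over `𝔽₂ = ZMod 2`. -/
noncomputable def eindicator {α : Type} (C : Set α) : α → ZMod 2 := C.indicator 1

namespace MultiDigraph

variable (D : MultiDigraph)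

/-- The cut space of (the underlying multigraph of) `D`: the `𝔽₂`-span of the
indicator vectors of the bonds. -/
noncomputable def cutSpace : Submodule (ZMod 2) (D.E → ZMod 2) :=
  Submodule.span (ZMod 2) (eindicator '' {S : Set D.E | D.IsBond S})

/-- `ℬ` is a basis of the cut space of `D` (a family of edge sets whose indicator
vectors are linearly independent and span the cut space). -/
noncomputable def IsCutSpaceBasis (ℬ : Set (Set D.E)) : Prop :=
  LinearIndependent (ZMod 2) (fun S : ℬ => eindicator (S : Set D.E)) ∧
    Submodule.span (ZMod 2) (eindicator '' ℬ) = D.cutSpace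

end MultiDigraph

/-! ## Special digraphs -/

/-- The digraph `𝒟(n₀,n₁,n₂)`: three layers, with all edges from layer 0 to layer 1 and
from layer 1 to layer 2. -/
def layeredD (n₀ n₁ n₂ : ℕ) : MultiDigraph where
  V := (Fin n₀ ⊕ Fin n₁) ⊕ Fin n₂
  E := (Fin n₀ × Fin n₁) ⊕ (Fin n₁ × Fin n₂)
  tail := Sum.elim (fun p => Sum.inl (Sum.inl p.1)) (fun p => Sum.inl (Sum.inr p.1))
  head := Sum.elim (fun p => Sum.inl (Sum.inr p.2)) (fun p => Sum.inr p.2)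

/-- `K⃗_{m,n}`: the complete bipartite graph oriented from the class of size `m` to the
class of size `n`. -/
def oneDirK (m n : ℕ) : MultiDigraph where
  V := Fin m ⊕ Fin n
  E := Fin m × Fin n
  tail := fun p => Sum.inl p.1
  head := fun p => Sum.inr p.2

/-- A diamond: two hubs and `n` further vertices, each of which is either a source with its
two edges going to the hubs, or a sink with its two edges coming from the hubs
(`σ i = true` meaning `xᵢ` is a source). -/
def diamondD (n : ℕ) (σ : Fin n → Bool) : MultiDigraph where
  V := Fin n ⊕ Fin 2
  E := Fin n × Fin 2
  tail := fun p => if σ p.1 then Sum.inl p.1 else Sum.inr p.2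
  head := fun p => if σ p.1 then Sum.inr p.2 else Sum.inl p.1

/-- The bicycle `C⃡_k`: the cycle of length `k` with every edge replaced by a pair of
anti-parallel directed edges. -/
noncomputable def bicycle (k : ℕ) (hk : k ≠ 0) : MultiDigraph :=
  haveI : NeZero k := ⟨hk⟩
  { V := ZMod k
    E := ZMod k × Bool
    fv := inferInstance
    fe := inferInstance
    dv := inferInstance
    de := inferInstance
    tail := fun p => if p.2 then p.1 else p.1 + 1
    head := fun p => if p.2 then p.1 + 1 else p.1 }

/-- An odd diamond. -/
def IsOddDiamond (D : MultiDigraph) : Prop :=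
  ∃ (n : ℕ) (σ : Fin n → Bool), 3 ≤ n ∧ Odd (n + 2) ∧ IsIsomorphic D (diamondD n σ)

/-- An odd one-direction. -/
def IsOddOneDirection (D : MultiDigraph) : Prop :=
  ∃ m n : ℕ, 2 ≤ m ∧ 2 ≤ n ∧ Odd (m + n) ∧ IsIsomorphic D (oneDirK m n)

/-! ## Symmetric difference of a family of sets -/

/-- The symmetric difference of a finite family of sets. -/
def symmDiffFam {α : Type} {k : ℕ} (F : Fin k → Set α) : Set α :=
  {a | Odd ({i : Fin k | a ∈ F i}).ncard}

/-! ## Oriented matroids -/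

/-- Raw data of an oriented matroid: a finite ground set together with a collection of
signed subsets (encoded as functions to `SignType`). -/
structure PreOM : Type 1 where
  E : Type
  [fe : Fintype E]
  [de : DecidableEq E]
  circuits : Set (E → SignType)

attribute [instance] PreOM.fe PreOM.de

/-- The support of a signed set. -/
def sgnSupport {α : Type} (X : α → SignType) : Set α := {e | X e ≠ 0}

namespace PreOM

/-- The oriented matroid axioms for the collection of signed circuits. -/
def IsOM (M : PreOM) : Prop :=
  (0 : M.E → SignType) ∉ M.circuits ∧
  (∀ X ∈ M.circuits, -X ∈ M.circuits) ∧
  (∀ X ∈ M.circuits, ∀ Y ∈ M.circuits, sgnSupport X ⊆ sgnSupport Y → X = Y ∨ X = -Y) ∧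
  ∀ X ∈ M.circuits, ∀ Y ∈ M.circuits, X ≠ -Y → ∀ e : M.E, X e = 1 → Y e = -1 →
    ∃ Z ∈ M.circuits, (∀ f, Z f = 1 → f ≠ e ∧ (X f = 1 ∨ Y f = 1)) ∧
      ∀ f, Z f = -1 → f ≠ e ∧ (X f = -1 ∨ Y f = -1)

/-- The circuits of the underlying matroid: supports of signed circuits. -/
def UCircuits (M : PreOM) : Set (Set M.E) :=
  {C | ∃ X ∈ M.circuits, C = sgnSupport X}

/-- A directed circuit: the support of a signed circuit with empty negative part. -/
def IsDirectedCircuit (M : PreOM) (C : Set M.E) : Prop :=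
  ∃ X ∈ M.circuits, (∀ e, X e ≠ -1) ∧ C = {e | X e = 1}

/-- Independent sets of the underlying matroid. -/
def Indep (M : PreOM) (I : Set M.E) : Prop := ∀ C ∈ M.UCircuits, ¬ C ⊆ I

/-- Bases of the underlying matroid. -/
def IsBase (M : PreOM) (B : Set M.E) : Prop :=
  M.Indep B ∧ ∀ B', M.Indep B' → B ⊆ B' → B' = B

/-- Cocircuits of the underlying matroid: minimal sets meeting every base. -/
def IsCocircuit (M : PreOM) (S : Set M.E) : Prop :=
  (∀ B, M.IsBase B → (S ∩ B).Nonempty) ∧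
    ∀ S' : Set M.E, S' ⊂ S → ¬ ∀ B, M.IsBase B → (S' ∩ B).Nonempty

/-- Signed cocircuits: signed sets supported on a cocircuit and orthogonal to every
signed circuit. -/
def IsSignedCocircuit (M : PreOM) (Y : M.E → SignType) : Prop :=
  M.IsCocircuit (sgnSupport Y) ∧
    ∀ X ∈ M.circuits,
      ((∃ e, (Y e = 1 ∧ X e = 1) ∨ (Y e = -1 ∧ X e = -1)) ↔
        (∃ e, (Y e = 1 ∧ X e = -1) ∨ (Y e = -1 ∧ X e = 1)))

/-- An element `e` is butterfly-contractible if there is a cocircuit `S` with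
`(S \ {e}, {e})` a signed cocircuit. -/
def ButterflyContractible (M : PreOM) (e : M.E) : Prop :=
  ∃ Y : M.E → SignType, M.IsSignedCocircuit Y ∧ Y e = -1 ∧ ∀ f, f ≠ e → Y f ≠ -1

/-- Deletion of a set of elements. -/
noncomputable def deleteSet (M : PreOM) (A : Set M.E) : PreOM where
  E := {f : M.E // f ∉ A}
  fe := Fintype.ofFinite _
  de := Classical.decEq _
  circuits := {X : {f : M.E // f ∉ A} → SignType |
    ∃ X' ∈ M.circuits, (∀ a ∈ A, X' a = 0) ∧ ∀ f : {f : M.E // f ∉ A}, X f = X' f.1}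

/-- Contraction of a single element: signed circuits are the support-minimal nonempty
traces of signed circuits. -/
noncomputable def contractElem (M : PreOM) (e : M.E) : PreOM where
  E := {f : M.E // f ≠ e}
  fe := Fintype.ofFinite _
  de := Classical.decEq _
  circuits := {X : {f : M.E // f ≠ e} → SignType |
    X ≠ 0 ∧ ∃ X' ∈ M.circuits, (∀ f : {f : M.E // f ≠ e}, X f = X' f.1) ∧
      ¬ ∃ Z ∈ M.circuits, (sgnSupport Z \ {e}) ⊂ (sgnSupport X' \ {e})}

/-- Isomorphism of (pre-)oriented matroids. -/
def Iso (M N : PreOM) : Prop :=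
  ∃ σ : M.E ≃ N.E, ∀ X : N.E → SignType, X ∈ N.circuits ↔ (X ∘ σ) ∈ M.circuits

/-- A minimal dependent set of a vector configuration. -/
def IsMinimalDep {F : Type} [Field F] {n : ℕ} {E : Type} (φ : E → (Fin n → F))
    (C : Set E) : Prop :=
  ¬ LinearIndependent F (fun e : C => φ e.1) ∧
    ∀ C' : Set E, C' ⊂ C → LinearIndependent F (fun e : C' => φ e.1)

/-- The underlying matroid is regular: representable over every field. -/
def Regular (M : PreOM) : Prop :=
  ∀ (F : Type) [Field F], ∃ (n : ℕ) (φ : M.E → (Fin n → F)),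
    ∀ C : Set M.E, C ∈ M.UCircuits ↔ IsMinimalDep φ C

/-- `M` is non-even: its underlying matroid is regular and some set of elements meets
every directed circuit an odd number of times. -/
def NonEven (M : PreOM) : Prop :=
  M.Regular ∧ ∃ J : Set M.E, ∀ C : Set M.E, M.IsDirectedCircuit C → Odd (J ∩ C).ncard

/-- Totally cyclic: every element lies in a directed circuit. -/
def TotallyCyclic (M : PreOM) : Prop :=
  ∀ e : M.E, ∃ C : Set M.E, M.IsDirectedCircuit C ∧ e ∈ C

/-- Coindependent set: contains no cocircuit. -/
def Coindependent (M : PreOM) (A : Set M.E) : Prop :=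
  ∀ S : Set M.E, M.IsCocircuit S → ¬ S ⊆ A

/-- The circuit space of the underlying (binary) matroid, over `𝔽₂`. -/
noncomputable def circuitSpace (M : PreOM) : Submodule (ZMod 2) (M.E → ZMod 2) :=
  Submodule.span (ZMod 2) (eindicator '' M.UCircuits)

/-- A directed circuit basis: a family of directed circuits whose indicator vectors form a
basis of the circuit space. -/
noncomputable def IsDirectedCircuitBasis (M : PreOM) (ℬ : Set (Set M.E)) : Prop :=
  (∀ C ∈ ℬ, M.IsDirectedCircuit C) ∧
    LinearIndependent (ZMod 2) (fun C : ℬ => eindicator (C : Set M.E)) ∧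
    Submodule.span (ZMod 2) (eindicator '' ℬ) = M.circuitSpace

end PreOM

/-! ## GB-minors -/

/-- A single GB-minor step: deletion of an element, or contraction of a
butterfly-contractible element. -/
inductive GBStep : PreOM → PreOM → Prop
  | del (M : PreOM) (e : M.E) : GBStep (M.deleteSet {e}) M
  | con (M : PreOM) (e : M.E) (h : M.ButterflyContractible e) : GBStep (M.contractElem e) M

/-- `N` is a GB-minor of `M`. -/
def IsGBMinor (N M : PreOM) : Prop := ReflTransGen GBStep N M

/-! ## Oriented matroids from digraphs -/

/-- The oriented bond matroid `M*(D)` of a digraph `D`: signed circuits are the signed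
incidence vectors of the bonds of `D`. -/
def bondOM (D : MultiDigraph) : PreOM where
  E := D.E
  circuits := {X : D.E → SignType | ∃ W : Set D.V, D.IsBond (D.cutAt W) ∧
    ∀ e : D.E, (X e = 1 ↔ (D.tail e ∈ W ∧ D.head e ∉ W)) ∧
      (X e = -1 ↔ (D.head e ∈ W ∧ D.tail e ∉ W))}

/-- The oriented graphic matroid `M(D)` of a digraph `D`: signed circuits are the signed
incidence vectors of the cycles of the underlying multigraph of `D`. -/
def cycleOM (D : MultiDigraph) : PreOM where
  E := D.E
  circuits := {X : D.E → SignType | D.IsSignedCycle X}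


-- STATEMENT 9
private lemma zmod2_cast (n : ℕ) : (n : ZMod 2) = if Odd n then 1 else 0 := by
  have h2 : (2 : ZMod 2) = 0 := by decide
  rcases Nat.even_or_odd n with h | h
  · rw [if_neg (by simpa [Nat.not_odd_iff_even] using h)]
    obtain ⟨m, rfl⟩ := h
    push_cast
    rw [← two_mul]
    simp [h2]
  · rw [if_pos h]
    obtain ⟨m, rfl⟩ := h
    push_cast
    simp [h2]

private lemma sum_eindicator {E : Type} [Fintype E] (S : Set E) :
    ∑ a : E, eindicator S a = ((S.ncard : ℕ) : ZMod 2) := by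
  classical
  rw [Set.ncard_eq_toFinset_card' S]
  simp [eindicator, Set.indicator_apply, Finset.sum_boole, Set.toFinset_setOf]

private lemma eindicator_inter {E : Type} (F J : Set E) (a : E) :
    eindicator (F ∩ J) a = eindicator F a * eindicator J a := by
  classical
  by_cases hF : a ∈ F <;> by_cases hJ : a ∈ J <;>
    simp [eindicator, Set.indicator_apply, hF, hJ]

private lemma eindicator_symmDiffFam {E : Type} [Fintype E] {k : ℕ} (F : Fin k → Set E)
    (a : E) : eindicator (symmDiffFam F) a = ∑ i, eindicator (F i) a := by
  classical
  have h1 : ∑ i, eindicator (F i) a = ((({i | a ∈ F i} : Set (Fin k)).ncard : ℕ) : ZMod 2) := by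
    rw [Set.ncard_eq_toFinset_card']
    simp [eindicator, Set.indicator_apply, Finset.sum_boole, Set.toFinset_setOf]
  rw [h1, zmod2_cast]
  simp [eindicator, symmDiffFam, Set.indicator_apply]

private lemma key_exclusion {E : Type} [Fintype E] (J : Set E) {k : ℕ} (F : Fin k → Set E)
    (hodd : ∀ i, Odd ((F i ∩ J).ncard)) (hk : Odd k) (hsd : symmDiffFam F = ∅) : False := by
  classical
  have h1 : ∑ i : Fin k, ∑ a : E, eindicator (F i) a * eindicator J a = (k : ZMod 2) := by
    have hone : ∀ i, ∑ a : E, eindicator (F i) a * eindicator J a = 1 := by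
      intro i
      calc ∑ a : E, eindicator (F i) a * eindicator J a
          = ∑ a : E, eindicator (F i ∩ J) a := by simp_rw [eindicator_inter]
        _ = (((F i ∩ J).ncard : ℕ) : ZMod 2) := sum_eindicator _
        _ = 1 := by rw [zmod2_cast, if_pos (hodd i)]
    simp [hone]
  rw [Finset.sum_comm] at h1
  have h2 : ∀ a : E, ∑ i : Fin k, eindicator (F i) a * eindicator J a = 0 := by
    intro a
    rw [← Finset.sum_mul, ← eindicator_symmDiffFam, hsd]
    simp [eindicator]
  simp only [h2, Finset.sum_const_zero] at h1
  rw [zmod2_cast, if_pos hk] at h1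
  exact one_ne_zero h1.symm

theorem stmt9 {E : Type} [Fintype E] (𝓕 : Set (Set E)) :
    Xor' (∃ J : Set E, ∀ F ∈ 𝓕, Odd (F ∩ J).ncard)
      (∃ (k : ℕ) (F : Fin k → Set E), Odd k ∧ (∀ i, F i ∈ 𝓕) ∧ symmDiffFam F = ∅) := by
  classical
  set V := (E → ZMod 2) × ZMod 2 with hV
  set gen : Set V := {p : V | ∃ F ∈ 𝓕, p = (eindicator F, 1)} with hgen
  set U : Submodule (ZMod 2) V := Submodule.span (ZMod 2) gen with hU
  -- (ii) implies membership
  have hBmem : (∃ (k : ℕ) (F : Fin k → Set E), Odd k ∧ (∀ i, F i ∈ 𝓕) ∧ symmDiffFam F = ∅) →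
      ((0 : E → ZMod 2), (1 : ZMod 2)) ∈ U := by
    rintro ⟨k, F, hk, hF, hsd⟩
    have hsum : ∑ i : Fin k, ((eindicator (F i), (1 : ZMod 2)) : V)
        = ((0 : E → ZMod 2), (1 : ZMod 2)) := by
      refine Prod.ext ?_ ?_
      · show (∑ i : Fin k, ((eindicator (F i), (1 : ZMod 2)) : V)).1 = 0
        rw [Prod.fst_sum]
        funext a
        rw [Finset.sum_apply]
        rw [← eindicator_symmDiffFam F a, hsd]
        simp [eindicator]
      · show (∑ i : Fin k, ((eindicator (F i), (1 : ZMod 2)) : V)).2 = 1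
        rw [Prod.snd_sum]
        simp [zmod2_cast, hk]
    rw [← hsum]
    exact Submodule.sum_mem _ fun i _ => Submodule.subset_span ⟨F i, hF i, rfl⟩
  -- membership implies (ii)
  have hmemB : ((0 : E → ZMod 2), (1 : ZMod 2)) ∈ U →
      (∃ (k : ℕ) (F : Fin k → Set E), Odd k ∧ (∀ i, F i ∈ 𝓕) ∧ symmDiffFam F = ∅) := by
    intro hm
    rw [hU, Submodule.mem_span_set'] at hm
    obtain ⟨n, f, g, hg⟩ := hm
    -- choose the witnessing sets
    have hch : ∀ i : Fin n, ∃ F ∈ 𝓕, (g i : V) = (eindicator F, 1) := fun i => (g i).2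
    choose Fc hFc hFeq using hch
    set S : Finset (Fin n) := Finset.univ.filter (fun i => f i = 1) with hS
    have hsmul : ∀ i : Fin n, f i • (g i : V) = if i ∈ S then (g i : V) else 0 := by
      intro i
      by_cases h : f i = 1
      · simp [hS, h]
      · have hz : ∀ a : ZMod 2, a ≠ 1 → a = 0 := by decide
        simp [hS, h, hz _ h]
    have hgs : ∑ i ∈ S, (g i : V) = ((0 : E → ZMod 2), (1 : ZMod 2)) := by
      rw [← hg, Finset.sum_congr rfl (fun i _ => hsmul i)]
      rw [Finset.sum_ite_mem, Finset.univ_inter]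
    set k := S.card with hk
    set e : {x // x ∈ S} ≃ Fin k := S.equivFin with he
    set Fam : Fin k → Set E := fun j => Fc (e.symm j).1 with hFam
    have hsum2 : ∑ j : Fin k, ((eindicator (Fam j), (1 : ZMod 2)) : V)
        = ((0 : E → ZMod 2), (1 : ZMod 2)) := by
      have e1 : ∑ j : Fin k, ((eindicator (Fam j), (1 : ZMod 2)) : V)
          = ∑ x : {x // x ∈ S}, ((eindicator (Fc x.1), (1 : ZMod 2)) : V) :=
        Equiv.sum_comp e.symm (fun x : {x // x ∈ S} => ((eindicator (Fc x.1), (1 : ZMod 2)) : V))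
      rw [e1]
      have e2 : ∀ x : {x // x ∈ S}, ((eindicator (Fc x.1), (1 : ZMod 2)) : V) = (g x.1 : V) :=
        fun x => (hFeq x.1).symm
      rw [Finset.sum_congr rfl (fun x _ => e2 x), ← hgs]
      exact Finset.sum_coe_sort S (fun i => (g i : V))
    refine ⟨k, Fam, ?_, fun j => hFc _, ?_⟩
    · have h2 := congrArg Prod.snd hsum2
      rw [Prod.snd_sum] at h2
      simp only [zmod2_cast] at h2
      simp only [Finset.sum_const, Finset.card_univ, Fintype.card_fin, nsmul_eq_mul,
        mul_one] at h2
      rw [zmod2_cast] at h2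
      by_contra hodd
      rw [if_neg hodd] at h2
      exact one_ne_zero h2.symm
    · have h1 := congrArg Prod.fst hsum2
      rw [Prod.fst_sum] at h1
      rw [Set.eq_empty_iff_forall_notMem]
      intro a ha
      have := congrFun h1 a
      rw [Finset.sum_apply, ← eindicator_symmDiffFam Fam a] at this
      rw [eindicator, Set.indicator_of_mem ha] at this
      exact one_ne_zero this
  -- non-membership implies (i)
  have hnA : ((0 : E → ZMod 2), (1 : ZMod 2)) ∉ U →
      ∃ J : Set E, ∀ F ∈ 𝓕, Odd (F ∩ J).ncard := by
    intro hm
    have hx : (Submodule.Quotient.mk (p := U) (((0 : E → ZMod 2), (1 : ZMod 2)) : V)) ≠ 0 := by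
      rwa [Ne, Submodule.Quotient.mk_eq_zero]
    obtain ⟨φ, hφ⟩ : ∃ φ : Module.Dual (ZMod 2) (V ⧸ U),
        φ (Submodule.Quotient.mk (((0 : E → ZMod 2), (1 : ZMod 2)) : V)) ≠ 0 := by
      by_contra h
      push_neg at h
      exact hx ((Module.forall_dual_apply_eq_zero_iff (ZMod 2) _).1 h)
    set ψ : V →ₗ[ZMod 2] ZMod 2 := φ.comp U.mkQ with hψ
    have hψU : ∀ u ∈ U, ψ u = 0 := by
      intro u hu
      have : U.mkQ u = 0 := (Submodule.Quotient.mk_eq_zero U).2 hu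
      simp [hψ, this]
    have hψ01 : ψ (((0 : E → ZMod 2), (1 : ZMod 2)) : V) = 1 := by
      have hne : ψ (((0 : E → ZMod 2), (1 : ZMod 2)) : V) ≠ 0 := hφ
      have hz : ∀ a : ZMod 2, a ≠ 0 → a = 1 := by decide
      exact hz _ hne
    set x : E → ZMod 2 := fun a => ψ ((Pi.single a 1, 0) : V) with hxdef
    set J : Set E := {b | x b = 1} with hJdef
    refine ⟨J, ?_⟩
    intro F hF
    have hgenF : ψ ((eindicator F, 1) : V) = 0 :=
      hψU _ (Submodule.subset_span ⟨F, hF, rfl⟩)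
    have hsplit : ((eindicator F, (1 : ZMod 2)) : V)
        = ((eindicator F, (0 : ZMod 2)) : V) + (((0 : E → ZMod 2), (1 : ZMod 2)) : V) := by
      simp
    have hF0 : ψ ((eindicator F, (0 : ZMod 2)) : V) = 1 := by
      have := hgenF
      rw [hsplit, map_add, hψ01] at this
      have hz : ∀ a : ZMod 2, a + 1 = 0 → a = 1 := by decide
      exact hz _ this
    have hexp : ((eindicator F, (0 : ZMod 2)) : V)
        = ∑ a : E, eindicator F a • (((Pi.single a 1 : E → ZMod 2), (0 : ZMod 2)) : V) := by
      refine Prod.ext ?_ ?_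
      · rw [Prod.fst_sum]
        funext b
        rw [Finset.sum_apply]
        simp only [Prod.smul_fst, Pi.smul_apply, smul_eq_mul, Pi.single_apply, mul_ite,
          mul_one, mul_zero]
        rw [Finset.sum_ite_eq]
        simp
      · rw [Prod.snd_sum]
        simp
    have hval : ∀ a : E, x a = eindicator J a := by
      intro a
      by_cases h : x a = 1
      · simp [eindicator, Set.indicator_apply, hJdef, Set.mem_setOf_eq, h]
      · have hz : ∀ c : ZMod 2, c ≠ 1 → c = 0 := by decide
        simp [eindicator, Set.indicator_apply, hJdef, Set.mem_setOf_eq, h, hz _ h]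
    have hsumval : ψ ((eindicator F, (0 : ZMod 2)) : V)
        = ∑ a : E, eindicator F a * eindicator J a := by
      rw [hexp, map_sum]
      refine Finset.sum_congr rfl ?_
      intro a _
      rw [map_smul, smul_eq_mul, ← hval a]
    have hcard : (((F ∩ J).ncard : ℕ) : ZMod 2) = 1 := by
      rw [← sum_eindicator]
      rw [← hF0, hsumval]
      exact Finset.sum_congr rfl fun a _ => eindicator_inter F J a
    rw [zmod2_cast] at hcard
    by_contra hodd
    rw [if_neg hodd] at hcard
    exact zero_ne_one hcard
  by_cases hm : (((0 : E → ZMod 2), (1 : ZMod 2)) : V) ∈ U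
  · refine Or.inr ⟨hmemB hm, ?_⟩
    rintro ⟨J, hJ⟩
    obtain ⟨k, F, hk, hF, hsd⟩ := hmemB hm
    exact key_exclusion J F (fun i => hJ (F i) (hF i)) hk hsd
  · refine Or.inl ⟨hnA hm, ?_⟩
    intro hB
    exact hm (hBmem hB)
end

section
/- Let D be a minimal obstruction. Then the underlying multigraph of D is 2-vertex-connected, and D is oriented, acyclic, and transitively reduced. -/
open Relation

namespace MultiDigraph

variable {D : MultiDigraph}

lemma mem_cutAt {X : Set D.V} {f : D.E} :
    f ∈ D.cutAt X ↔ ((D.tail f ∈ X ∧ D.head f ∉ X) ∨ (D.tail f ∉ X ∧ D.head f ∈ X)) :=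
  Iff.rfl

lemma cutAt_compl (X : Set D.V) : D.cutAt Xᶜ = D.cutAt X := by
  ext f
  simp only [cutAt, Set.mem_setOf_eq, Set.mem_compl_iff, not_not]
  tauto

/-- If no edge enters `X`, then a directed walk starting outside `X` stays outside. -/
lemma no_enter_walk {X : Set D.V} (hX : ∀ e : D.E, ¬(D.tail e ∉ X ∧ D.head e ∈ X))
    {a b : D.V} (h : ReflTransGen D.dstep a b) (ha : a ∉ X) : b ∉ X := by
  induction h with
  | refl => exact ha
  | tail _ hcb ih =>
    obtain ⟨e, hte, hhe⟩ := hcb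
    intro hb
    exact hX e ⟨hte ▸ ih, hhe ▸ hb⟩

lemma walkAvoiding_imp {e₀ : D.E} {a b : D.V} (h : ReflTransGen (D.dstepAvoiding e₀) a b) :
    ReflTransGen D.dstep a b :=
  ReflTransGen.mono (fun _ _ ⟨e, _, h1, h2⟩ => ⟨e, h1, h2⟩) _ _ h

/-- A walk from inside `Y` to outside `Y` contains a crossing edge, with subwalks. -/
lemma walk_cross {e₀ : D.E} {Y : Set D.V} {a b : D.V}
    (h : ReflTransGen (D.dstepAvoiding e₀) a b) (ha : a ∈ Y) (hb : b ∉ Y) :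
    ∃ g : D.E, g ≠ e₀ ∧ g ∈ D.cutAt Y ∧
      ReflTransGen (D.dstepAvoiding e₀) a (D.tail g) ∧
      ReflTransGen (D.dstepAvoiding e₀) (D.head g) b := by
  induction h with
  | refl => exact absurd ha hb
  | @tail c b' hac hcb ih =>
    obtain ⟨e, hne, hte, hhe⟩ := hcb
    by_cases hc : c ∈ Y
    · exact ⟨e, hne, Or.inl ⟨hte ▸ hc, hhe ▸ hb⟩, hte ▸ hac, hhe ▸ ReflTransGen.refl⟩
    · obtain ⟨g, h1, h2, h3, h4⟩ := ih hc
      exact ⟨g, h1, h2, h3, h4.tail ⟨e, hne, hte, hhe⟩⟩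

/-- Any digraph on at most two vertices has an odd dijoin. -/
lemma smallV (hV : Fintype.card D.V ≤ 2) : D.HasOddDijoin := by
  by_cases hS : ∃ S : Set D.E, D.IsDirectedBond S
  · obtain ⟨S₀, hS₀⟩ := hS
    obtain ⟨e₀, he₀⟩ := hS₀.1.1.1
    -- every nonempty cut equals the set of non-loop edges
    have key : ∀ (X : Set D.V), (D.cutAt X).Nonempty → D.cutAt X = {f | D.tail f ≠ D.head f} := by
      intro X hne
      obtain ⟨f₀, hf₀⟩ := hne
      -- get u ∈ X, w ∉ X
      obtain ⟨u, w, hu, hw⟩ : ∃ u w, u ∈ X ∧ w ∉ X := by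
        rcases hf₀ with ⟨h1, h2⟩ | ⟨h1, h2⟩
        · exact ⟨_, _, h1, h2⟩
        · exact ⟨_, _, h2, h1⟩
      have huw : u ≠ w := fun h => hw (h ▸ hu)
      have hall : ∀ z : D.V, z = u ∨ z = w := by
        intro z
        by_contra hz
        push_neg at hz
        have : ({u, w, z} : Finset D.V).card ≤ Fintype.card D.V := Finset.card_le_univ _
        rw [Finset.card_insert_of_notMem (by simp [huw, Ne.symm hz.1]),
          Finset.card_insert_of_notMem (by simp [Ne.symm hz.2]),
          Finset.card_singleton] at this
        omega
      have hmem : ∀ z : D.V, z ∈ X ↔ z = u := by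
        intro z
        rcases hall z with rfl | rfl
        · simp [hu]
        · simp [hw, huw.symm]
      ext f
      simp only [mem_cutAt, hmem, Set.mem_setOf_eq]
      constructor
      · rintro (⟨h1, h2⟩ | ⟨h1, h2⟩)
        · rw [h1]; exact fun h => h2 h.symm
        · rw [h2]; exact h1
      · intro hne'
        rcases hall (D.tail f) with h1 | h1 <;> rcases hall (D.head f) with h2 | h2
        · exact absurd (h1.trans h2.symm) hne'
        · exact Or.inl ⟨h1, by rw [h2]; exact fun h => huw h.symm⟩
        · exact Or.inr ⟨by rw [h1]; exact fun h => huw h.symm, h2⟩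
        · exact absurd (h1.trans h2.symm) hne'
    refine ⟨{e₀}, fun S hS' => ?_⟩
    obtain ⟨hSne, X, hX⟩ := hS'.1.1
    obtain ⟨hS₀ne, X₀, hX₀⟩ := hS₀.1.1
    have : S = S₀ := by
      rw [hX, hX₀, key X (hX ▸ hSne), key X₀ (hX₀ ▸ hS₀ne)]
    have heS : e₀ ∈ S := this ▸ he₀
    have : {e₀} ∩ S = {e₀} := Set.inter_eq_left.mpr (Set.singleton_subset_iff.mpr heS)
    rw [this, Set.ncard_singleton]
    exact odd_one
  · exact ⟨∅, fun S hS' => absurd ⟨S, hS'⟩ hS⟩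

end MultiDigraph
namespace MultiDigraph

variable {D : MultiDigraph}

lemma ncard_val_inter {α : Type} {p : α → Prop} (J' : Set {x // p x}) (S : Set α) :
    ((Subtype.val '' J') ∩ S).ncard = (J' ∩ (Subtype.val ⁻¹' S)).ncard := by
  rw [← Set.image_inter_preimage, Set.ncard_image_of_injective _ Subtype.val_injective]

lemma eqvGen_single {e₀ : D.E} {u w : D.V}
    (h : EqvGen (D.touchRel {e₀}) u w) :
    u = w ∨ (u = D.tail e₀ ∧ w = D.head e₀) ∨ (u = D.head e₀ ∧ w = D.tail e₀) := by
  induction h with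
  | rel x y hxy =>
    obtain ⟨e, he, h1, h2⟩ := hxy
    rw [Set.mem_singleton_iff] at he
    subst he
    exact Or.inr (Or.inl ⟨h1.symm, h2.symm⟩)
  | refl x => exact Or.inl rfl
  | symm x y _ ih => tauto
  | trans x y z _ _ ih1 ih2 =>
    rcases ih1 with rfl | ⟨rfl, rfl⟩ | ⟨rfl, rfl⟩ <;>
      rcases ih2 with h | ⟨h1, h2⟩ | ⟨h1, h2⟩ <;> tauto

lemma contract_mk_eq_iff {e₀ : D.E} {u w : D.V} :
    (Quotient.mk (EqvGen.setoid (D.touchRel {e₀})) u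
      = Quotient.mk (EqvGen.setoid (D.touchRel {e₀})) w) ↔
    (u = w ∨ (u = D.tail e₀ ∧ w = D.head e₀) ∨ (u = D.head e₀ ∧ w = D.tail e₀)) := by
  constructor
  · intro h
    exact eqvGen_single (Quotient.exact h)
  · rintro (rfl | ⟨rfl, rfl⟩ | ⟨rfl, rfl⟩)
    · rfl
    · exact Quotient.sound (EqvGen.rel _ _ ⟨e₀, rfl, rfl, rfl⟩)
    · exact (Quotient.sound (EqvGen.rel _ _ ⟨e₀, rfl, rfl, rfl⟩)).symm

lemma contract_dbond {e₀ : D.E} {S : Set D.E} (hS : D.IsDirectedBond S)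
    (hsep : ∀ X : Set D.V, S = D.cutAt X →
      (∀ e : D.E, ¬(D.tail e ∉ X ∧ D.head e ∈ X)) → (D.tail e₀ ∈ X ↔ D.head e₀ ∈ X)) :
    e₀ ∉ S ∧ (D.contract {e₀}).IsDirectedBond (Subtype.val ⁻¹' S) := by
  obtain ⟨⟨hScut, hmin⟩, hSne, X₂, hX₂, hdir⟩ := hS
  set s := EqvGen.setoid (D.touchRel {e₀}) with hs
  have hxy : D.tail e₀ ∈ X₂ ↔ D.head e₀ ∈ X₂ := hsep X₂ hX₂ hdir
  have he₀S : e₀ ∉ S := by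
    rw [hX₂]
    rintro (⟨h1, h2⟩ | ⟨h1, h2⟩) <;> tauto
  have hTtail : ∀ f : (D.contract {e₀}).E,
      (D.contract {e₀}).tail f = Quotient.mk s (D.tail f.1) := fun _ => rfl
  have hThead : ∀ f : (D.contract {e₀}).E,
      (D.contract {e₀}).head f = Quotient.mk s (D.head f.1) := fun _ => rfl
  -- saturation of X₂
  have sat : ∀ u : D.V, Quotient.mk s u ∈ Quotient.mk s '' X₂ ↔ u ∈ X₂ := by
    intro u
    constructor
    · rintro ⟨w, hw, hweq⟩
      rcases contract_mk_eq_iff.mp hweq with rfl | ⟨rfl, rfl⟩ | ⟨rfl, rfl⟩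
      · exact hw
      · exact hxy.mp hw
      · exact hxy.mpr hw
    · exact fun hu => Set.mem_image_of_mem _ hu
  set X' : Set (D.contract {e₀}).V := Quotient.mk s '' X₂ with hX'
  have hcut' : (Subtype.val ⁻¹' S : Set (D.contract {e₀}).E) = (D.contract {e₀}).cutAt X' := by
    ext f
    show f.1 ∈ S ↔ _
    erw [hX₂, mem_cutAt, mem_cutAt, hTtail, hThead, sat, sat]
  have hdir' : ∀ f : (D.contract {e₀}).E,
      ¬((D.contract {e₀}).tail f ∉ X' ∧ (D.contract {e₀}).head f ∈ X') := by
    intro f hf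
    erw [hTtail, hThead, sat, sat] at hf
    exact hdir f.1 hf
  have hne' : (Subtype.val ⁻¹' S : Set (D.contract {e₀}).E).Nonempty := by
    obtain ⟨f, hf⟩ := hSne
    exact ⟨⟨f, by simp [Set.mem_singleton_iff]; rintro rfl; exact he₀S hf⟩, hf⟩
  refine ⟨he₀S, ⟨⟨hne', X', hcut'⟩, ?_⟩, hne', X', hcut', hdir'⟩
  -- bond minimality
  intro T hTcut hTsub
  obtain ⟨hTne, W', hW'⟩ := hTcut
  set W : Set D.V := {u | Quotient.mk s u ∈ W'} with hW
  have himg : Subtype.val '' T = D.cutAt W := by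
    ext f
    constructor
    · rintro ⟨f', hf', rfl⟩
      have := hW' ▸ hf'
      erw [mem_cutAt, hTtail, hThead] at this
      exact this
    · intro hf
      have hfne : f ≠ e₀ := by
        rintro rfl
        have : Quotient.mk s (D.tail f) = Quotient.mk s (D.head f) :=
          Quotient.sound (EqvGen.rel _ _ ⟨f, rfl, rfl, rfl⟩)
        rw [mem_cutAt] at hf
        rcases hf with ⟨h1, h2⟩ | ⟨h1, h2⟩
        · exact h2 (show Quotient.mk s (D.head f) ∈ W' from
            this ▸ (h1 : Quotient.mk s (D.tail f) ∈ W'))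
        · exact h1 (show Quotient.mk s (D.tail f) ∈ W' from
            this ▸ (h2 : Quotient.mk s (D.head f) ∈ W'))
      refine ⟨⟨f, by simpa [Set.mem_singleton_iff] using hfne⟩, ?_, rfl⟩
      erw [hW', mem_cutAt, hTtail, hThead]
      exact hf
  have hTS : Subtype.val '' T ⊆ S := by
    rintro f ⟨f', hf', rfl⟩
    exact hTsub hf'
  have hTne' : (Subtype.val '' T).Nonempty := hTne.image _
  have heq := hmin (Subtype.val '' T) ⟨hTne', W, himg⟩ hTS
  have : Subtype.val '' T = Subtype.val '' (Subtype.val ⁻¹' S : Set (D.contract {e₀}).E) := by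
    erw [heq, Set.image_preimage_eq_inter_range, Subtype.range_coe_subtype]
    ext f
    simp only [Set.mem_inter_iff, Set.mem_setOf_eq, Set.mem_singleton_iff, iff_self_and]
    intro hf
    rintro rfl
    exact he₀S hf
  exact Set.image_injective.mpr Subtype.val_injective this

end MultiDigraph
namespace MultiDigraph

variable {D : MultiDigraph}

lemma delete_dbond {e₀ : D.E} (hdel : D.Deletable e₀) {S : Set D.E}
    (hS : D.IsDirectedBond S) :
    (D.deleteEdge e₀).IsDirectedBond (Subtype.val ⁻¹' S) := by
  obtain ⟨⟨hScut, hmin⟩, hSne, X₂, hX₂, hdir⟩ := hS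
  obtain ⟨hloop, hwalk⟩ := hdel
  have hTtail : ∀ f : (D.deleteEdge e₀).E, (D.deleteEdge e₀).tail f = D.tail f.1 := fun _ => rfl
  have hThead : ∀ f : (D.deleteEdge e₀).E, (D.deleteEdge e₀).head f = D.head f.1 := fun _ => rfl
  have hval : Subtype.val '' (Subtype.val ⁻¹' S : Set (D.deleteEdge e₀).E) = S \ {e₀} := by
    erw [Set.image_preimage_eq_inter_range, Subtype.range_coe_subtype]
    ext f
    simp only [Set.mem_inter_iff, Set.mem_setOf_eq, Set.mem_diff, Set.mem_singleton_iff]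
  have hcut' : (Subtype.val ⁻¹' S : Set (D.deleteEdge e₀).E)
      = (D.deleteEdge e₀).cutAt (X₂ : Set (D.deleteEdge e₀).V) := by
    ext f
    show f.1 ∈ S ↔ _
    erw [hX₂, mem_cutAt]
  have hdir' : ∀ f : (D.deleteEdge e₀).E,
      ¬((D.deleteEdge e₀).tail f ∉ X₂ ∧ (D.deleteEdge e₀).head f ∈ X₂) :=
    fun f hf => hdir f.1 hf
  -- nonempty
  have hne' : (Subtype.val ⁻¹' S : Set (D.deleteEdge e₀).E).Nonempty := by
    by_cases he₀S : e₀ ∈ S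
    · have hcross : D.tail e₀ ∈ X₂ ∧ D.head e₀ ∉ X₂ := by
        have h2 : e₀ ∈ D.cutAt X₂ := hX₂ ▸ he₀S
        rw [mem_cutAt] at h2
        rcases h2 with h | h
        · exact h
        · exact absurd h (hdir e₀)
      obtain ⟨g, hg, hgcut, -, -⟩ := walk_cross hwalk hcross.1 hcross.2
      exact ⟨⟨g, hg⟩, show g ∈ S by rw [hX₂]; exact hgcut⟩
    · obtain ⟨f, hf⟩ := hSne
      exact ⟨⟨f, fun h => he₀S (h ▸ hf)⟩, hf⟩
  refine ⟨⟨⟨hne', X₂, hcut'⟩, ?_⟩, hne', X₂, hcut', hdir'⟩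
  -- bond minimality
  intro T hTcut hTsub
  obtain ⟨hTne, Y, hY⟩ := hTcut
  have himg : Subtype.val '' T = D.cutAt Y \ {e₀} := by
    ext f
    constructor
    · rintro ⟨f', hf', rfl⟩
      have h2 := hY ▸ hf'
      erw [mem_cutAt, hTtail, hThead] at h2
      exact ⟨h2, f'.2⟩
    · rintro ⟨hf, hfe⟩
      refine ⟨⟨f, hfe⟩, ?_, rfl⟩
      erw [hY, mem_cutAt, hTtail, hThead]
      exact hf
  have hTS : Subtype.val '' T ⊆ S := by
    rintro f ⟨f', hf', rfl⟩
    exact hTsub hf'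
  have hTne' : (Subtype.val '' T).Nonempty := hTne.image _
  have hfinal : Subtype.val '' T = S \ {e₀} := by
    by_cases hY₀ : e₀ ∈ D.cutAt Y
    · by_cases he₀S : e₀ ∈ S
      · have hsub : D.cutAt Y ⊆ S := by
          intro f hf
          by_cases hfe : f = e₀
          · exact hfe ▸ he₀S
          · exact hTS (himg ▸ (⟨hf, hfe⟩ : f ∈ D.cutAt Y \ {e₀}))
        have h3 : D.cutAt Y = S := hmin _ ⟨⟨e₀, hY₀⟩, Y, rfl⟩ hsub
        rw [himg, h3]
      · exfalso
        have hsame : D.tail e₀ ∈ X₂ ↔ D.head e₀ ∈ X₂ := by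
          by_contra hc
          apply he₀S
          rw [hX₂, mem_cutAt]
          tauto
        erw [mem_cutAt] at hY₀
        have hgex : ∃ g : D.E, g ≠ e₀ ∧ g ∈ D.cutAt Y ∧
            ReflTransGen (D.dstepAvoiding e₀) (D.tail e₀) (D.tail g) ∧
            ReflTransGen (D.dstepAvoiding e₀) (D.head g) (D.head e₀) := by
          rcases hY₀ with ⟨h1, h2⟩ | ⟨h1, h2⟩
          · exact @walk_cross D e₀ Y _ _ hwalk h1 h2
          · obtain ⟨g, hg1, hg2, hg3, hg4⟩ :=
              @walk_cross D e₀ Yᶜ _ _ hwalk h1 (fun h => h h2)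
            exact ⟨g, hg1, (cutAt_compl (D := D) Y) ▸ hg2, hg3, hg4⟩
        obtain ⟨g, hg1, hg2, hg3, hg4⟩ := hgex
        have hgS : g ∈ S := hTS (himg ▸ (⟨hg2, hg1⟩ : g ∈ D.cutAt Y \ {e₀}))
        have hgX : D.tail g ∈ X₂ ∧ D.head g ∉ X₂ := by
          have h2 : g ∈ D.cutAt X₂ := hX₂ ▸ hgS
          rw [mem_cutAt] at h2
          rcases h2 with h | h
          · exact h
          · exact absurd h (hdir g)
        by_cases hx : D.tail e₀ ∈ X₂
        · exact (no_enter_walk hdir (walkAvoiding_imp hg4) hgX.2) (hsame.mp hx)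
        · exact (no_enter_walk hdir (walkAvoiding_imp hg3) hx) hgX.1
    · have hdiff : D.cutAt Y \ {e₀} = D.cutAt Y := by
        ext f
        simp only [Set.mem_diff, Set.mem_singleton_iff, and_iff_left_iff_imp]
        rintro hf rfl
        exact hY₀ hf
      have hcutY : D.IsCut (Subtype.val '' T) := ⟨hTne', Y, by rw [himg, hdiff]⟩
      have hSeq := hmin _ hcutY hTS
      have he₀S : e₀ ∉ S := by
        rw [← hSeq]
        rintro ⟨f', -, hf'⟩
        exact f'.2 hf'
      rw [Set.diff_singleton_eq_self he₀S]
      exact hSeq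
  exact Set.image_injective.mpr Subtype.val_injective (hfinal.trans hval.symm)

lemma delV_dbond {v : D.V} (hv : D.Isolated v) {S : Set D.E} (hS : D.IsDirectedBond S) :
    (D.deleteVertex v hv).IsDirectedBond S := by
  obtain ⟨⟨hScut, hmin⟩, hSne, X₂, hX₂, hdir⟩ := hS
  have hTtail : ∀ f : D.E, (D.deleteVertex v hv).tail f = ⟨D.tail f, (hv f).1⟩ := fun _ => rfl
  have hThead : ∀ f : D.E, (D.deleteVertex v hv).head f = ⟨D.head f, (hv f).2⟩ := fun _ => rfl
  set X' : Set (D.deleteVertex v hv).V := {u | u.1 ∈ X₂} with hX'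
  have hcut' : S = (D.deleteVertex v hv).cutAt X' := by
    ext f
    rw [hX₂]
    rfl
  have hdir' : ∀ f : D.E,
      ¬((D.deleteVertex v hv).tail f ∉ X' ∧ (D.deleteVertex v hv).head f ∈ X') :=
    fun f hf => hdir f hf
  refine ⟨⟨⟨hSne, X', hcut'⟩, ?_⟩, hSne, X', hcut', hdir'⟩
  intro T hTcut hTsub
  obtain ⟨hTne, W', hW'⟩ := hTcut
  set W : Set D.V := Subtype.val '' W' with hW
  have hWmem : ∀ (u : D.V) (hu : u ≠ v), (u ∈ W ↔ (⟨u, hu⟩ : {x : D.V // x ≠ v}) ∈ W') := by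
    intro u hu
    constructor
    · rintro ⟨u', hu', rfl⟩
      exact hu'
    · intro h
      exact ⟨_, h, rfl⟩
  have himg : T = D.cutAt W := by
    ext f
    erw [hW', mem_cutAt, mem_cutAt, hTtail, hThead,
      hWmem _ (hv f).1, hWmem _ (hv f).2]
    exact Iff.rfl
  exact hmin T ⟨hTne, W, himg⟩ hTsub

end MultiDigraph
lemma step_oddDijoin {D D' : MultiDigraph} (h : MinimalObstruction D)
    (hstep : CutMinorStep D' D) : D'.HasOddDijoin := by
  apply h.2
  refine ⟨ReflTransGen.single hstep, ?_⟩
  rintro ⟨iso⟩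
  cases hstep with
  | contractEdge D e =>
    have hlt : Fintype.card (D.contract {e}).E < Fintype.card D.E :=
      Fintype.card_lt_of_injective_of_notMem Subtype.val Subtype.val_injective
        (b := e) (by rintro ⟨⟨f, hf⟩, heq⟩; exact hf (show f ∈ ({e} : Set D.E) from heq))
    exact absurd (Fintype.card_congr iso.emap) (Nat.ne_of_lt hlt)
  | delEdge D e hd =>
    have hlt : Fintype.card (D.deleteEdge e).E < Fintype.card D.E :=
      Fintype.card_lt_of_injective_of_notMem Subtype.val Subtype.val_injective
        (b := e) (by rintro ⟨⟨f, hf⟩, heq⟩; exact hf heq)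
    exact absurd (Fintype.card_congr iso.emap) (Nat.ne_of_lt hlt)
  | delVertex D v hv =>
    have hlt : Fintype.card (D.deleteVertex v hv).V < Fintype.card D.V :=
      Fintype.card_lt_of_injective_of_notMem Subtype.val Subtype.val_injective
        (b := v) (by rintro ⟨⟨u, hu⟩, heq⟩; exact hu heq)
    exact absurd (Fintype.card_congr iso.vmap) (Nat.ne_of_lt hlt)

namespace MultiDigraph

lemma split_contra {D : MultiDigraph} (hno : ¬ D.HasOddDijoin)
    (hcontr : ∀ e₀ : D.E, (D.contract {e₀}).HasOddDijoin)
    (hnoiso : ∀ v : D.V, ¬ D.Isolated v)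
    (A B : Set D.V) (hAne : A.Nonempty) (hBne : B.Nonempty)
    (hdisj : ∀ u, ¬(u ∈ A ∧ u ∈ B))
    (hcross : ∀ f : D.E, ¬(D.tail f ∈ A ∧ D.head f ∈ B) ∧ ¬(D.tail f ∈ B ∧ D.head f ∈ A))
    (hcover : ∀ f : D.E, (D.tail f ∈ A ∨ D.head f ∈ A) ∨ (D.tail f ∈ B ∨ D.head f ∈ B))
    (hXw : ∀ S : Set D.E, D.IsCut S → ∃ X, S = D.cutAt X ∧ X ⊆ A ∪ B) : False := by
  have key : ∀ P Q : Set D.V, Q.Nonempty → (∀ u, ¬(u ∈ P ∧ u ∈ Q)) →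
      (∀ f : D.E, ¬(D.tail f ∈ P ∧ D.head f ∈ Q) ∧ ¬(D.tail f ∈ Q ∧ D.head f ∈ P)) →
      ∃ J : Set D.E, ∀ S, D.IsDirectedBond S →
        S ⊆ {f | D.tail f ∈ P ∨ D.head f ∈ P} → Odd ((J ∩ S).ncard) := by
    intro P Q hQne hPQ hcrossPQ
    by_cases hEQ : ∃ e₀ : D.E, D.tail e₀ ∈ Q ∨ D.head e₀ ∈ Q
    · obtain ⟨e₀, he₀⟩ := hEQ
      obtain ⟨J', hJ'⟩ := hcontr e₀
      refine ⟨Subtype.val '' J', fun S hS hsub => ?_⟩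
      have hsep : ∀ X, S = D.cutAt X → (∀ e, ¬(D.tail e ∉ X ∧ D.head e ∈ X)) →
          (D.tail e₀ ∈ X ↔ D.head e₀ ∈ X) := by
        intro X hX _
        by_contra hc
        have h1 : e₀ ∈ S := by rw [hX, mem_cutAt]; tauto
        have h2 := hsub h1
        rcases h2 with h2 | h2 <;> rcases he₀ with h3 | h3
        · exact hPQ _ ⟨h2, h3⟩
        · exact (hcrossPQ e₀).1 ⟨h2, h3⟩
        · exact (hcrossPQ e₀).2 ⟨h3, h2⟩
        · exact hPQ _ ⟨h2, h3⟩
      obtain ⟨-, hbond'⟩ := contract_dbond hS hsep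
      have h1 := hJ' _ hbond'
      erw [ncard_val_inter]; assumption
    · exfalso
      obtain ⟨u, hu⟩ := hQne
      push_neg at hEQ
      exact hnoiso u (fun e => ⟨fun h => (hEQ e).1 (h ▸ hu), fun h => (hEQ e).2 (h ▸ hu)⟩)
  obtain ⟨JA, hJA⟩ := key A B hBne hdisj hcross
  obtain ⟨JB, hJB⟩ := key B A hAne (fun u hu => hdisj u ⟨hu.2, hu.1⟩)
    (fun f => ⟨(hcross f).2, (hcross f).1⟩)
  have hEdisj : ∀ f : D.E, ¬(f ∈ {f | D.tail f ∈ A ∨ D.head f ∈ A} ∧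
      f ∈ {f | D.tail f ∈ B ∨ D.head f ∈ B}) := by
    rintro f ⟨h1, h2⟩
    rcases h1 with h1 | h1 <;> rcases h2 with h2 | h2
    · exact hdisj _ ⟨h1, h2⟩
    · exact (hcross f).1 ⟨h1, h2⟩
    · exact (hcross f).2 ⟨h2, h1⟩
    · exact hdisj _ ⟨h1, h2⟩
  have hsplit : ∀ S, D.IsBond S → S ⊆ {f | D.tail f ∈ A ∨ D.head f ∈ A} ∨
      S ⊆ {f | D.tail f ∈ B ∨ D.head f ∈ B} := by
    intro S hbond
    obtain ⟨X, hXeq, hXsub⟩ := hXw S hbond.1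
    have hcutA : D.cutAt (X ∩ A) = S ∩ {f | D.tail f ∈ A ∨ D.head f ∈ A} := by
      ext f
      rw [hXeq]
      simp only [mem_cutAt, Set.mem_inter_iff, Set.mem_setOf_eq]
      constructor
      · rintro (⟨⟨ht1, ht2⟩, hh⟩ | ⟨ht, hh1, hh2⟩)
        · have hhead : D.head f ∉ X := fun hX' => by
            rcases hXsub hX' with hA | hB
            · exact hh ⟨hX', hA⟩
            · exact (hcross f).1 ⟨ht2, hB⟩
          exact ⟨Or.inl ⟨ht1, hhead⟩, Or.inl ht2⟩
        · have htail : D.tail f ∉ X := fun hX' => by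
            rcases hXsub hX' with hA | hB
            · exact ht ⟨hX', hA⟩
            · exact (hcross f).2 ⟨hB, hh2⟩
          exact ⟨Or.inr ⟨htail, hh1⟩, Or.inr hh2⟩
      · rintro ⟨hcr | hcr, hEA⟩
        · have htA : D.tail f ∈ A := by
            rcases hXsub hcr.1 with hA | hB
            · exact hA
            · rcases hEA with h | h
              · exact absurd ⟨h, hB⟩ (hdisj _)
              · exact absurd ⟨hB, h⟩ (hcross f).2
          exact Or.inl ⟨⟨hcr.1, htA⟩, fun hh => hcr.2 hh.1⟩
        · have hhA : D.head f ∈ A := by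
            rcases hXsub hcr.2 with hA | hB
            · exact hA
            · rcases hEA with h | h
              · exact absurd ⟨h, hB⟩ (hcross f).1
              · exact absurd ⟨h, hB⟩ (hdisj _)
          exact Or.inr ⟨fun ht => hcr.1 ht.1, hcr.2, hhA⟩
    by_cases hSA : (S ∩ {f | D.tail f ∈ A ∨ D.head f ∈ A}).Nonempty
    · left
      have heq := hbond.2 _ ⟨hSA, X ∩ A, hcutA.symm⟩ Set.inter_subset_left
      intro f hf
      exact ((heq.symm ▸ hf) : f ∈ S ∩ {f | D.tail f ∈ A ∨ D.head f ∈ A}).2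
    · right
      intro f hf
      rcases hcover f with h | h
      · exact absurd ⟨f, hf, h⟩ hSA
      · exact h
  apply hno
  refine ⟨(JA ∩ {f | D.tail f ∈ A ∨ D.head f ∈ A}) ∪
    (JB ∩ {f | D.tail f ∈ B ∨ D.head f ∈ B}), fun S hS => ?_⟩
  rcases hsplit S hS.1 with hsub | hsub
  · have hint : ((JA ∩ {f | D.tail f ∈ A ∨ D.head f ∈ A}) ∪
        (JB ∩ {f | D.tail f ∈ B ∨ D.head f ∈ B})) ∩ S = JA ∩ S := by
      ext f
      simp only [Set.mem_inter_iff, Set.mem_union]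
      constructor
      · rintro ⟨hJ | hJ, hfS⟩
        · exact ⟨hJ.1, hfS⟩
        · exact absurd ⟨hsub hfS, hJ.2⟩ (hEdisj f)
      · intro hf
        exact ⟨Or.inl ⟨hf.1, hsub hf.2⟩, hf.2⟩
    rw [hint]
    exact hJA S hS hsub
  · have hint : ((JA ∩ {f | D.tail f ∈ A ∨ D.head f ∈ A}) ∪
        (JB ∩ {f | D.tail f ∈ B ∨ D.head f ∈ B})) ∩ S = JB ∩ S := by
      ext f
      simp only [Set.mem_inter_iff, Set.mem_union]
      constructor
      · rintro ⟨hJ | hJ, hfS⟩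
        · exact absurd ⟨hJ.2, hsub hfS⟩ (hEdisj f)
        · exact ⟨hJ.1, hfS⟩
      · intro hf
        exact ⟨Or.inr ⟨hf.1, hsub hf.2⟩, hf.2⟩
    rw [hint]
    exact hJB S hS hsub

end MultiDigraph
-- STATEMENT 10
theorem stmt10 (D : MultiDigraph) (h : MinimalObstruction D) :
    D.TwoConnected ∧ D.Oriented ∧ D.Acyclic ∧ D.TransitivelyReduced := by
  have hno : ¬ D.HasOddDijoin := h.1
  have hstep : ∀ {D' : MultiDigraph}, CutMinorStep D' D → D'.HasOddDijoin :=
    fun hs => step_oddDijoin h hs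
  -- at least three vertices
  have hcard : 3 ≤ Fintype.card D.V := by
    by_contra hc
    exact hno (MultiDigraph.smallV (by omega))
  -- acyclic
  have hacyc : D.Acyclic := by
    rintro a b ⟨e₀, hte, hhe⟩ hba
    have hba' : ReflTransGen D.dstep (D.head e₀) (D.tail e₀) := by
      rw [hte, hhe]; exact hba
    obtain ⟨J', hJ'⟩ := hstep (CutMinorStep.contractEdge D e₀)
    apply hno
    refine ⟨Subtype.val '' J', fun S hS => ?_⟩
    have hsep : ∀ X, S = D.cutAt X → (∀ e, ¬(D.tail e ∉ X ∧ D.head e ∈ X)) →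
        (D.tail e₀ ∈ X ↔ D.head e₀ ∈ X) := by
      intro X _ hdir
      constructor
      · intro hx
        by_contra hy
        exact (MultiDigraph.no_enter_walk hdir hba' hy) hx
      · intro hy
        by_contra hx
        exact hdir e₀ ⟨hx, hy⟩
    obtain ⟨-, hbond'⟩ := MultiDigraph.contract_dbond hS hsep
    have h1 := hJ' _ hbond'
    erw [MultiDigraph.ncard_val_inter]; assumption
  -- no loops
  have hloops : ∀ e : D.E, D.tail e ≠ D.head e := by
    intro e he
    exact hacyc (D.tail e) (D.head e) ⟨e, rfl, rfl⟩ (by rw [he])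
  -- transitively reduced
  have htr : D.TransitivelyReduced := by
    intro e₀ hdel
    obtain ⟨J', hJ'⟩ := hstep (CutMinorStep.delEdge D e₀ hdel)
    apply hno
    refine ⟨Subtype.val '' J', fun S hS => ?_⟩
    have h1 := hJ' _ (MultiDigraph.delete_dbond hdel hS)
    erw [MultiDigraph.ncard_val_inter]; assumption
  -- oriented
  have horient : D.Oriented := by
    refine ⟨hloops, ?_⟩
    intro e f hef hsets
    have htf : D.tail f = D.tail e ∨ D.tail f = D.head e := by
      have h1 : D.tail f ∈ ({D.tail e, D.head e} : Set D.V) := by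
        rw [hsets]; exact Set.mem_insert _ _
      simpa using h1
    have hhf : D.head f = D.tail e ∨ D.head f = D.head e := by
      have h1 : D.head f ∈ ({D.tail e, D.head e} : Set D.V) := by
        rw [hsets]; exact Set.mem_insert_iff.mpr (Or.inr rfl)
      simpa using h1
    rcases htf with h1 | h1 <;> rcases hhf with h2 | h2
    · exact hloops f (h1.trans h2.symm)
    · exact htr e ⟨hloops e, ReflTransGen.single ⟨f, Ne.symm hef, h1, h2⟩⟩
    · exact hacyc (D.tail e) (D.head e) ⟨e, rfl, rfl⟩ (ReflTransGen.single ⟨f, h1, h2⟩)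
    · exact hloops f (h1.trans h2.symm)
  -- no isolated vertices
  have hnoiso : ∀ v : D.V, ¬ D.Isolated v := by
    intro v hv
    obtain ⟨J', hJ'⟩ := hstep (CutMinorStep.delVertex D v hv)
    exact hno ⟨J', fun S hS => hJ' S (MultiDigraph.delV_dbond hv hS)⟩
  have hcontr : ∀ e₀ : D.E, (D.contract {e₀}).HasOddDijoin :=
    fun e₀ => hstep (CutMinorStep.contractEdge D e₀)
  -- weak connectivity
  have hwc : D.WeaklyConnected := by
    intro a b
    by_contra hab
    refine MultiDigraph.split_contra hno hcontr hnoiso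
      {u | ReflTransGen D.ustep a u} {u | ReflTransGen D.ustep a u}ᶜ
      ⟨a, ReflTransGen.refl⟩ ⟨b, hab⟩ (fun u hu => hu.2 hu.1) ?_ ?_ ?_
    · intro f
      constructor
      · rintro ⟨h1, h2⟩
        exact h2 (h1.tail ⟨f, Or.inl ⟨rfl, rfl⟩⟩)
      · rintro ⟨h1, h2⟩
        exact h1 (h2.tail ⟨f, Or.inr ⟨rfl, rfl⟩⟩)
    · intro f
      by_cases h1 : ReflTransGen D.ustep a (D.tail f)
      · exact Or.inl (Or.inl h1)
      · exact Or.inr (Or.inl h1)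
    · intro S hScut
      obtain ⟨-, X, hX⟩ := hScut
      exact ⟨X, hX, by intro u _; exact (em _).imp id id⟩
  -- two-connectivity
  have h2c : ∀ v a b : D.V, a ≠ v → b ≠ v → ReflTransGen (D.ustepAvoiding v) a b := by
    intro v a b hav hbv
    by_contra hab
    refine MultiDigraph.split_contra hno hcontr hnoiso
      {u | u ≠ v ∧ ReflTransGen (D.ustepAvoiding v) a u}
      {u | u ≠ v ∧ ¬(u ≠ v ∧ ReflTransGen (D.ustepAvoiding v) a u)}
      ⟨a, hav, ReflTransGen.refl⟩ ⟨b, hbv, fun hb => hab hb.2⟩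
      (fun u hu => hu.2.2 hu.1) ?_ ?_ ?_
    · intro f
      constructor
      · rintro ⟨⟨ht1, ht2⟩, hh1, hh2⟩
        exact hh2 ⟨hh1, ht2.tail ⟨ht1, hh1, f, Or.inl ⟨rfl, rfl⟩⟩⟩
      · rintro ⟨⟨ht1, ht2⟩, hh1, hh2⟩
        exact ht2 ⟨ht1, hh2.tail ⟨hh1, ht1, f, Or.inr ⟨rfl, rfl⟩⟩⟩
    · intro f
      by_cases h1 : D.tail f = v
      · by_cases h2 : D.head f = v
        · exact absurd (h1.trans h2.symm) (hloops f)
        · by_cases h3 : (D.head f ∈ {u | u ≠ v ∧ ReflTransGen (D.ustepAvoiding v) a u})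
          · exact Or.inl (Or.inr h3)
          · exact Or.inr (Or.inr ⟨h2, fun hh => h3 hh⟩)
      · by_cases h3 : (D.tail f ∈ {u | u ≠ v ∧ ReflTransGen (D.ustepAvoiding v) a u})
        · exact Or.inl (Or.inl h3)
        · exact Or.inr (Or.inl ⟨h1, fun hh => h3 hh⟩)
    · intro S hScut
      obtain ⟨-, X, hX⟩ := hScut
      by_cases hvX : v ∈ X
      · refine ⟨Xᶜ, by rw [hX, MultiDigraph.cutAt_compl], ?_⟩
        intro u hu
        by_cases huA : u ∈ {u | u ≠ v ∧ ReflTransGen (D.ustepAvoiding v) a u}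
        · exact Or.inl huA
        · refine Or.inr ⟨?_, huA⟩
          rintro rfl
          exact hu hvX
      · refine ⟨X, hX, ?_⟩
        intro u hu
        by_cases huA : u ∈ {u | u ≠ v ∧ ReflTransGen (D.ustepAvoiding v) a u}
        · exact Or.inl huA
        · refine Or.inr ⟨?_, huA⟩
          rintro rfl
          exact hvX hu
  exact ⟨⟨hcard, hwc, h2c⟩, horient, hacyc, htr⟩
end

section
/- Let D be a minimal obstruction. Then for every edge e ∈ E(D), the digraph D/e is acyclic; and for every vertex v of D that is a source or a sink, the digraph D/E(v) is acyclic, where E(v) denotes the set of edges of D incident with v. -/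
open Relation

/-! ## Auxiliary lemmas for Statement 11 -/

section Stmt11Aux

open Relation

namespace MultiDigraph

variable (D : MultiDigraph)

/-- Walks with steps avoiding a set `A` of edges, or jumps inside the contraction classes. -/
def Qrel (A : Set D.E) (x y : D.V) : Prop :=
  (∃ f, f ∉ A ∧ D.tail f = x ∧ D.head f = y) ∨ EqvGen (D.touchRel A) x y

lemma mono_avoid {e : D.E} {x y : D.V} (h : ReflTransGen (D.dstepAvoiding e) x y) :
    ReflTransGen D.dstep x y := by
  induction h with
  | refl => exact .refl
  | tail _ hs ih =>
    obtain ⟨f, _, h1, h2⟩ := hs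
    exact ih.tail ⟨f, h1, h2⟩

lemma closed_reach {X : Set D.V} (hX : ∀ e, ¬(D.tail e ∉ X ∧ D.head e ∈ X)) {x y : D.V}
    (h : ReflTransGen D.dstep x y) (hx : x ∉ X) : y ∉ X := by
  induction h with
  | refl => exact hx
  | tail _ hstep ih =>
    obtain ⟨f, h1, h2⟩ := hstep
    intro hc
    exact hX f ⟨h1 ▸ ih, h2 ▸ hc⟩

lemma avoidAux (e : D.E) {x y : D.V} (h : ReflTransGen D.dstep x y) :
    ReflTransGen (D.dstepAvoiding e) x y ∨
      (ReflTransGen D.dstep x (D.tail e) ∧ ReflTransGen D.dstep (D.head e) y) := by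
  induction h using Relation.ReflTransGen.head_induction_on with
  | refl => exact Or.inl .refl
  | head hstep _ ih =>
    obtain ⟨g, h1, h2⟩ := hstep
    by_cases hge : g = e
    · subst hge
      refine Or.inr ⟨?_, ?_⟩
      · rw [← h1]
      · rw [← h2] at ih
        rcases ih with w | ⟨_, w2⟩
        · exact D.mono_avoid w
        · exact w2
    · rcases ih with w | ⟨w1, w2⟩
      · exact Or.inl (ReflTransGen.head ⟨g, hge, h1, h2⟩ w)
      · exact Or.inr ⟨ReflTransGen.head ⟨g, h1, h2⟩ w1, w2⟩

lemma eqvGen_subset_class {A : Set D.E} {K : Set D.V}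
    (hA : ∀ f ∈ A, D.tail f ∈ K ∧ D.head f ∈ K) {x y : D.V}
    (h : EqvGen (D.touchRel A) x y) : x = y ∨ (x ∈ K ∧ y ∈ K) := by
  induction h with
  | rel a b hab =>
    obtain ⟨f, hf, h1, h2⟩ := hab
    exact Or.inr ⟨h1 ▸ (hA f hf).1, h2 ▸ (hA f hf).2⟩
  | refl a => exact Or.inl rfl
  | symm a b _ ih => tauto
  | trans a b c _ _ ih1 ih2 =>
    rcases ih1 with rfl | ⟨h1, h2⟩
    · exact ih2
    · rcases ih2 with rfl | ⟨h3, h4⟩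
      · exact Or.inr ⟨h1, h2⟩
      · exact Or.inr ⟨h1, h4⟩

lemma reach' {A : Set D.E} {K : Set D.V}
    (hA : ∀ f ∈ A, D.tail f ∈ K ∧ D.head f ∈ K) {x y : D.V}
    (h : ReflTransGen (D.Qrel A) x y) :
    ReflTransGen D.dstep x y ∨
      ((∃ k ∈ K, ReflTransGen D.dstep x k) ∧ ∃ k ∈ K, ReflTransGen D.dstep k y) := by
  induction h using Relation.ReflTransGen.head_induction_on with
  | refl => exact Or.inl .refl
  | head hstep _ ih =>
    rcases hstep with ⟨f, _, h1, h2⟩ | heqv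
    · rcases ih with w | ⟨⟨k, hk, w1⟩, hr⟩
      · exact Or.inl (ReflTransGen.head ⟨f, h1, h2⟩ w)
      · exact Or.inr ⟨⟨k, hk, ReflTransGen.head ⟨f, h1, h2⟩ w1⟩, hr⟩
    · rcases D.eqvGen_subset_class hA heqv with rfl | ⟨ha, hb⟩
      · exact ih
      · refine Or.inr ⟨⟨_, ha, .refl⟩, ?_⟩
        rcases ih with w | ⟨_, hr⟩
        · exact ⟨_, hb, w⟩
        · exact hr

lemma lift_walk (A : Set D.E) {q q' : (D.contract A).V}
    (h : ReflTransGen (D.contract A).dstep q q') :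
    ∀ a : D.V, Quotient.mk (EqvGen.setoid (D.touchRel A)) a = q →
      ∃ b : D.V, Quotient.mk (EqvGen.setoid (D.touchRel A)) b = q' ∧
        ReflTransGen (D.Qrel A) a b := by
  induction h with
  | refl => exact fun a ha => ⟨a, ha, .refl⟩
  | tail _ hstep ih =>
    intro a ha
    obtain ⟨b, hb, w⟩ := ih a ha
    obtain ⟨f, h1, h2⟩ := hstep
    refine ⟨D.head f.1, h2, ?_⟩
    have he : EqvGen (D.touchRel A) b (D.tail f.1) := Quotient.exact (hb.trans h1.symm)
    exact (w.tail (Or.inr he)).tail (Or.inl ⟨f.1, f.2, rfl, rfl⟩)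

lemma cyc_lift (A : Set D.E) (h : ¬ (D.contract A).Acyclic) :
    ∃ f : D.E, f ∉ A ∧ ReflTransGen (D.Qrel A) (D.head f) (D.tail f) := by
  unfold Acyclic at h
  push_neg at h
  obtain ⟨a, b, hab, hw⟩ := h
  obtain ⟨f, h1, h2⟩ := hab
  obtain ⟨c, hc, w⟩ := D.lift_walk A hw (D.head f.1) h2
  have he : EqvGen (D.touchRel A) c (D.tail f.1) := Quotient.exact (hc.trans h1.symm)
  exact ⟨f.1, f.2, w.tail (Or.inr he)⟩

lemma cross {e : D.E} {Y : Set D.V} {x y : D.V}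
    (h : ReflTransGen (D.dstepAvoiding e) x y) (hy : y ∉ Y) :
    x ∈ Y → ∃ f, f ≠ e ∧ (D.tail f ∈ Y ∧ D.head f ∉ Y) ∧
      ReflTransGen (D.dstepAvoiding e) x (D.tail f) ∧
      ReflTransGen (D.dstepAvoiding e) (D.head f) y := by
  induction h using Relation.ReflTransGen.head_induction_on with
  | refl => exact fun hx => absurd hx hy
  | @head a b hstep hrest ih =>
    intro hx
    obtain ⟨f₀, hne, h1, h2⟩ := hstep
    by_cases hb : b ∈ Y
    · obtain ⟨f, hf1, hf2, hf3, hf4⟩ := ih hb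
      exact ⟨f, hf1, hf2, ReflTransGen.head ⟨f₀, hne, h1, h2⟩ hf3, hf4⟩
    · exact ⟨f₀, hne, ⟨h1 ▸ hx, h2 ▸ hb⟩, by rw [h1], by rw [h2]; exact hrest⟩

end MultiDigraph

section Cards

lemma not_iso_aux {D₁ D₂ : MultiDigraph} (h : Nat.card D₁.E ≠ Nat.card D₂.E) :
    ¬ IsIsomorphic D₁ D₂ := fun ⟨i⟩ => h (Nat.card_congr i.emap)

lemma card_ne_aux (D : MultiDigraph) (e : D.E) (P : D.E → Prop) (hP : ∀ f, P f ↔ f ≠ e) :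
    Nat.card {f : D.E // P f} ≠ Nat.card D.E := by
  classical
  have e1 : {f : D.E // P f} ≃ {f : D.E // ¬ (f = e)} := Equiv.subtypeEquivRight (by simpa using hP)
  have e2 : ({f : D.E // f = e} ⊕ {f : D.E // ¬ (f = e)}) ≃ D.E := Equiv.sumCompl (· = e)
  haveI : Unique {f : D.E // f = e} := ⟨⟨⟨e, rfl⟩⟩, fun ⟨f, hf⟩ => by subst hf; rfl⟩
  have h1 : Nat.card D.E = 1 + Nat.card {f : D.E // ¬ (f = e)} := by
    rw [← Nat.card_congr e2, Nat.card_sum, Nat.card_unique]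
  rw [Nat.card_congr e1, h1]
  omega

end Cards

namespace MultiDigraph

variable (D : MultiDigraph)

lemma proper_contract (e : D.E) : IsProperCutMinor (D.contract {e}) D :=
  ⟨ReflTransGen.single (CutMinorStep.contractEdge D e),
    not_iso_aux (card_ne_aux D e _ (fun f => by simp))⟩

lemma proper_delete (e : D.E) (hd : D.Deletable e) : IsProperCutMinor (D.deleteEdge e) D :=
  ⟨ReflTransGen.single (CutMinorStep.delEdge D e hd),
    not_iso_aux (card_ne_aux D e _ (fun f => Iff.rfl))⟩

end MultiDigraph

namespace MultiDigraph

variable (D : MultiDigraph)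

lemma contract_transfer (g : D.E)
    (hcyc : ReflTransGen D.dstep (D.head g) (D.tail g))
    (h' : (D.contract {g}).HasOddDijoin) : D.HasOddDijoin := by
  classical
  obtain ⟨J', hJ'⟩ := h'
  refine ⟨Subtype.val '' J', ?_⟩
  intro S hS
  obtain ⟨⟨⟨hne, _⟩, hmin⟩, _, X, hSX, hdir⟩ := hS
  -- the edge `g` is in no directed cut since it lies on a directed closed walk
  have hgS : g ∉ S := by
    intro hg
    rw [hSX] at hg
    rcases hg with ⟨h1, h2⟩ | ⟨h1, h2⟩
    · exact (D.closed_reach hdir hcyc h2) h1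
    · exact hdir g ⟨h1, h2⟩
  have hside : D.tail g ∈ X ↔ D.head g ∈ X := by
    rw [hSX] at hgS
    simp only [cutAt, Set.mem_setOf_eq] at hgS
    tauto
  -- the projected side of the cut
  set W : Set (D.contract {g}).V :=
    {q | ∃ x ∈ X, Quotient.mk (EqvGen.setoid (D.touchRel {g})) x = q} with hW
  have hmW : ∀ y : D.V, Quotient.mk (EqvGen.setoid (D.touchRel {g})) y ∈ W ↔ y ∈ X := by
    intro y
    constructor
    · rintro ⟨x, hx, hxy⟩
      have heqv : EqvGen (D.touchRel {g}) x y := Quotient.exact hxy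
      rcases D.eqvGen_subset_class (K := {D.tail g, D.head g})
        (by rintro f hf; rw [Set.mem_singleton_iff] at hf; subst hf
            exact ⟨Set.mem_insert _ _, Set.mem_insert_of_mem _ rfl⟩) heqv with rfl | ⟨h1, h2⟩
      · exact hx
      · rcases h1 with rfl | h1 <;> rcases h2 with rfl | h2
        · exact hx
        · rw [Set.mem_singleton_iff] at h2; rw [h2]; exact hside.mp hx
        · rw [Set.mem_singleton_iff] at h1; rw [h1] at hx; exact hside.mpr hx
        · rw [Set.mem_singleton_iff] at h1 h2; rw [h2]; rw [h1] at hx; exact hx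
    · intro hy
      exact ⟨y, hy, rfl⟩
  set S' : Set (D.contract {g}).E := {f | f.1 ∈ S} with hS'
  have hcutW : (D.contract {g}).cutAt W = S' := by
    ext f
    show ((D.contract {g}).tail f ∈ W ∧ (D.contract {g}).head f ∉ W) ∨ _ ↔ f.1 ∈ S
    rw [show (D.contract {g}).tail f = Quotient.mk (EqvGen.setoid (D.touchRel {g})) (D.tail f.1)
        from rfl,
      show (D.contract {g}).head f = Quotient.mk (EqvGen.setoid (D.touchRel {g})) (D.head f.1)
        from rfl]
    exact (or_congr (and_congr (hmW _) (not_congr (hmW _)))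
      (and_congr (not_congr (hmW _)) (hmW _))).trans (by subst hSX; exact Iff.rfl)
  have hS'ne : S'.Nonempty := by
    obtain ⟨s₀, hs₀⟩ := hne
    have : s₀ ∉ ({g} : Set D.E) := by
      rw [Set.mem_singleton_iff]
      rintro rfl
      exact hgS hs₀
    exact ⟨⟨s₀, this⟩, hs₀⟩
  have hdircut : (D.contract {g}).IsDirectedCut S' := by
    refine ⟨hS'ne, W, hcutW.symm, ?_⟩
    rintro f ⟨h1, h2⟩
    exact hdir f.1 ⟨fun hx => h1 ((hmW _).mpr hx), (hmW _).mp h2⟩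
  have hbond : (D.contract {g}).IsBond S' := by
    refine ⟨⟨hS'ne, W, hcutW.symm⟩, ?_⟩
    rintro T' ⟨T'ne, W₂, hT'W₂⟩ hsub
    set X₂ : Set D.V := {x | Quotient.mk (EqvGen.setoid (D.touchRel {g})) x ∈ W₂} with hX₂
    have hgX₂ : (D.tail g ∈ X₂) ↔ (D.head g ∈ X₂) := by
      have : Quotient.mk (EqvGen.setoid (D.touchRel {g})) (D.tail g)
          = Quotient.mk (EqvGen.setoid (D.touchRel {g})) (D.head g) :=
        Quotient.sound (EqvGen.rel _ _ ⟨g, rfl, rfl, rfl⟩)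
      show Quotient.mk _ (D.tail g) ∈ W₂ ↔ Quotient.mk _ (D.head g) ∈ W₂
      rw [this]
    have hXcut : D.cutAt X₂ = Subtype.val '' T' := by
      ext f
      by_cases hf : f ∈ ({g} : Set D.E)
      · rw [Set.mem_singleton_iff] at hf; subst hf
        constructor
        · rintro (⟨h1, h2⟩ | ⟨h1, h2⟩)
          · exact absurd (hgX₂.mp h1) h2
          · exact absurd (hgX₂.mpr h2) h1
        · rintro ⟨f', _, hval⟩
          exact absurd (hval ▸ f'.2) (by rw [Set.mem_singleton_iff]; exact fun hq => hq rfl)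
      · have hiff : f ∈ D.cutAt X₂ ↔ (⟨f, hf⟩ : (D.contract {g}).E) ∈ (D.contract {g}).cutAt W₂ :=
          Iff.rfl
        rw [hiff, ← hT'W₂]
        constructor
        · intro hT; exact ⟨⟨f, hf⟩, hT, rfl⟩
        · rintro ⟨f', hf', hval⟩
          have : f' = ⟨f, hf⟩ := Subtype.ext hval
          rwa [this] at hf'
    have hTcut : D.IsCut (Subtype.val '' T') := ⟨T'ne.image _, X₂, hXcut.symm⟩
    have hsubS : Subtype.val '' T' ⊆ S := by
      rintro _ ⟨f', hf', rfl⟩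
      exact hsub hf'
    have hTS := hmin _ hTcut hsubS
    ext f'
    constructor
    · intro hf'
      show f'.1 ∈ S
      rw [← hTS]
      exact ⟨f', hf', rfl⟩
    · intro hf'
      have : f'.1 ∈ Subtype.val '' T' := by rw [hTS]; exact hf'
      obtain ⟨f'', hf'', hval⟩ := this
      rwa [show f'' = f' from Subtype.ext hval] at hf''
  have himg : Subtype.val '' J' ∩ S = Subtype.val '' (J' ∩ S') := by
    ext f
    constructor
    · rintro ⟨⟨f', hf', rfl⟩, hfS⟩
      exact ⟨f', ⟨hf', hfS⟩, rfl⟩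
    · rintro ⟨f', ⟨hf', hfS⟩, rfl⟩
      exact ⟨⟨f', hf', rfl⟩, hfS⟩
  rw [himg, Set.ncard_image_of_injective _ Subtype.val_injective]
  exact hJ' _ ⟨hbond, hdircut⟩

end MultiDigraph

namespace MultiDigraph

variable (D : MultiDigraph)

lemma delete_transfer (e : D.E) (hdel : D.Deletable e)
    (h' : (D.deleteEdge e).HasOddDijoin) : D.HasOddDijoin := by
  classical
  obtain ⟨J', hJ'⟩ := h'
  obtain ⟨hne_e, P⟩ := hdel
  refine ⟨Subtype.val '' J', ?_⟩
  intro S hS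
  obtain ⟨⟨⟨hne, _⟩, hmin⟩, _, X, hSX, hdir⟩ := hS
  set S' : Set (D.deleteEdge e).E := {f | f.1 ∈ S} with hS'def
  have hcutX : (D.deleteEdge e).cutAt X = S' := by
    ext f
    show _ ∨ _ ↔ f.1 ∈ S
    rw [hSX]
    exact Iff.rfl
  -- nonemptiness of S'
  have hS'ne : S'.Nonempty := by
    by_cases he : e ∈ S
    · have htX : D.tail e ∈ X ∧ D.head e ∉ X := by
        rw [hSX] at he
        rcases he with h | h
        · exact h
        · exact absurd h (hdir e)
      obtain ⟨f, hfe, ⟨hf1, hf2⟩, -, -⟩ := D.cross P htX.2 htX.1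
      exact ⟨⟨f, hfe⟩, show f ∈ S by rw [hSX]; exact Or.inl ⟨hf1, hf2⟩⟩
    · obtain ⟨s₀, hs₀⟩ := hne
      exact ⟨⟨s₀, fun hq => he (hq ▸ hs₀)⟩, hs₀⟩
  have hdircut : (D.deleteEdge e).IsDirectedCut S' :=
    ⟨hS'ne, X, hcutX.symm, fun f => hdir f.1⟩
  -- a crossing edge of the deletable path, for an arbitrary set crossed by `e`
  have hcrossY : ∀ Y : Set D.V, e ∈ D.cutAt Y → ∃ f, f ≠ e ∧ f ∈ D.cutAt Y ∧
      ReflTransGen (D.dstepAvoiding e) (D.tail e) (D.tail f) ∧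
      ReflTransGen (D.dstepAvoiding e) (D.head f) (D.head e) := by
    rintro Y (⟨h1, h2⟩ | ⟨h1, h2⟩)
    · obtain ⟨f, hf1, hf2, hf3, hf4⟩ := D.cross P h2 h1
      exact ⟨f, hf1, Or.inl hf2, hf3, hf4⟩
    · obtain ⟨f, hf1, hf2, hf3, hf4⟩ := D.cross (Y := Yᶜ) P (by simpa using h2) (by simpa using h1)
      refine ⟨f, hf1, Or.inr ⟨?_, ?_⟩, hf3, hf4⟩
      · simpa using hf2.1
      · simpa using hf2.2
  -- minimality
  have hbond : (D.deleteEdge e).IsBond S' := by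
    refine ⟨⟨hS'ne, X, hcutX.symm⟩, ?_⟩
    rintro T' ⟨T'ne, Y, hT'Y⟩ hsub
    by_cases heY : e ∈ D.cutAt Y
    · by_cases he : e ∈ S
      · -- cutAt Y = insert e (val '' T')
        have hYeq : D.cutAt Y = insert e (Subtype.val '' T') := by
          ext f
          by_cases hf : f = e
          · subst hf
            simp only [Set.mem_insert_iff, true_or, iff_true]
            exact heY
          · have hiff : f ∈ D.cutAt Y ↔ (⟨f, hf⟩ : (D.deleteEdge e).E) ∈ (D.deleteEdge e).cutAt Y :=
              Iff.rfl
            rw [hiff, ← hT'Y]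
            constructor
            · intro hT; exact Set.mem_insert_of_mem _ ⟨⟨f, hf⟩, hT, rfl⟩
            · rintro (hq | ⟨f', hf', hval⟩)
              · exact absurd hq hf
              · rwa [show f' = ⟨f, hf⟩ from Subtype.ext hval] at hf'
        have hc : D.IsCut (insert e (Subtype.val '' T')) :=
          ⟨⟨e, Set.mem_insert _ _⟩, Y, hYeq.symm⟩
        have hsub2 : insert e (Subtype.val '' T') ⊆ S := by
          rintro f (rfl | ⟨f', hf', rfl⟩)
          · exact he
          · exact hsub hf'
        have hTS := hmin _ hc hsub2
        ext f'
        constructor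
        · intro hf'
          show f'.1 ∈ S
          rw [← hTS]
          exact Set.mem_insert_of_mem _ ⟨f', hf', rfl⟩
        · intro hf'
          have : f'.1 ∈ insert e (Subtype.val '' T') := by rw [hTS]; exact hf'
          rcases this with hq | ⟨f'', hf'', hval⟩
          · exact absurd hq f'.2
          · rwa [show f'' = f' from Subtype.ext hval] at hf''
      · -- e ∉ S : impossible that e crosses Y
        exfalso
        obtain ⟨f, hfe, hfY, hw1, hw2⟩ := hcrossY Y heY
        have hfT : (⟨f, hfe⟩ : (D.deleteEdge e).E) ∈ T' := by rw [hT'Y]; exact hfY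
        have hfS : f ∈ S := hsub hfT
        have hXside : ¬ (D.tail e ∈ X ∧ D.head e ∉ X) ∧ ¬ (D.tail e ∉ X ∧ D.head e ∈ X) := by
          rw [hSX] at he
          simp only [cutAt, Set.mem_setOf_eq] at he
          tauto
        rw [hSX] at hfS
        rcases hfS with ⟨h1, h2⟩ | ⟨h1, h2⟩
        · by_cases hte : D.tail e ∈ X
          · have hhe : D.head e ∈ X := by tauto
            exact (D.closed_reach hdir (D.mono_avoid hw2) h2) hhe
          · exact (D.closed_reach hdir (D.mono_avoid hw1) hte) h1
        · exact hdir f ⟨h1, h2⟩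
    · -- e does not cross Y
      have hYeq : D.cutAt Y = Subtype.val '' T' := by
        ext f
        by_cases hf : f = e
        · subst hf
          exact iff_of_false heY (by rintro ⟨f', -, hval⟩; exact f'.2 hval)
        · have hiff : f ∈ D.cutAt Y ↔ (⟨f, hf⟩ : (D.deleteEdge e).E) ∈ (D.deleteEdge e).cutAt Y :=
            Iff.rfl
          rw [hiff, ← hT'Y]
          constructor
          · intro hT; exact ⟨⟨f, hf⟩, hT, rfl⟩
          · rintro ⟨f', hf', hval⟩
            rwa [show f' = ⟨f, hf⟩ from Subtype.ext hval] at hf'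
      have hc : D.IsCut (Subtype.val '' T') := ⟨T'ne.image _, Y, hYeq.symm⟩
      have hsub2 : Subtype.val '' T' ⊆ S := by
        rintro _ ⟨f', hf', rfl⟩
        exact hsub hf'
      have hTS := hmin _ hc hsub2
      ext f'
      constructor
      · intro hf'
        show f'.1 ∈ S
        rw [← hTS]
        exact ⟨f', hf', rfl⟩
      · intro hf'
        have : f'.1 ∈ Subtype.val '' T' := by rw [hTS]; exact hf'
        obtain ⟨f'', hf'', hval⟩ := this
        rwa [show f'' = f' from Subtype.ext hval] at hf''
  have himg : Subtype.val '' J' ∩ S = Subtype.val '' (J' ∩ S') := by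
    ext f
    constructor
    · rintro ⟨⟨f', hf', rfl⟩, hfS⟩
      exact ⟨f', ⟨hf', hfS⟩, rfl⟩
    · rintro ⟨f', ⟨hf', hfS⟩, rfl⟩
      exact ⟨⟨f', hf', rfl⟩, hfS⟩
  rw [himg, Set.ncard_image_of_injective _ Subtype.val_injective]
  exact hJ' _ ⟨hbond, hdircut⟩

end MultiDigraph

namespace MultiDigraph

variable (D : MultiDigraph)

lemma obstruction_acyclic (h : MinimalObstruction D) : D.Acyclic := by
  rintro a b ⟨g, rfl, rfl⟩ hw
  exact h.1 (D.contract_transfer g hw (h.2 _ (D.proper_contract g)))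

end MultiDigraph

end Stmt11Aux

-- STATEMENT 11
theorem stmt11 (D : MultiDigraph) (h : MinimalObstruction D) :
    (∀ e : D.E, (D.contract {e}).Acyclic) ∧
      ∀ v : D.V, ((∀ e : D.E, D.head e ≠ v) ∨ (∀ e : D.E, D.tail e ≠ v)) →
        (D.contract {e : D.E | D.tail e = v ∨ D.head e = v}).Acyclic := by
  have hacy : D.Acyclic := D.obstruction_acyclic h
  constructor
  · -- Part 1 : contracting a single edge
    intro e
    by_contra hnot
    obtain ⟨f, hfA, w⟩ := D.cyc_lift {e} hnot
    have hfe : f ≠ e := by simpa using hfA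
    have hK : ∀ f' ∈ ({e} : Set D.E),
        D.tail f' ∈ ({D.tail e, D.head e} : Set D.V) ∧
        D.head f' ∈ ({D.tail e, D.head e} : Set D.V) := by
      rintro f' hf'
      rw [Set.mem_singleton_iff] at hf'
      subst hf'
      exact ⟨Set.mem_insert _ _, Set.mem_insert_of_mem _ rfl⟩
    rcases D.reach' hK w with hw | ⟨⟨k', hk', w1⟩, ⟨k, hk, w2⟩⟩
    · exact hacy _ _ ⟨f, rfl, rfl⟩ hw
    · simp only [Set.mem_insert_iff, Set.mem_singleton_iff] at hk hk'
      rcases hk' with rfl | rfl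
      · rcases hk with rfl | rfl
        · -- k' = tail e, k = tail e
          exact hacy _ _ ⟨f, rfl, rfl⟩ (w1.trans w2)
        · -- k' = tail e, k = head e
          exact hacy _ _ ⟨e, rfl, rfl⟩
            (w2.trans ((ReflTransGen.single ⟨f, rfl, rfl⟩).trans w1))
      · rcases hk with rfl | rfl
        · -- k' = head e, k = tail e : main case
          rcases D.avoidAux e w2 with p1 | ⟨-, w3⟩
          · rcases D.avoidAux e w1 with p2 | ⟨w4, -⟩
            · have hts : D.tail e ≠ D.head e := by
                intro hq
                exact hacy _ _ ⟨e, rfl, rfl⟩ (by rw [hq])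
              have hdel : D.Deletable e := ⟨hts, (p1.tail ⟨f, hfe, rfl, rfl⟩).trans p2⟩
              exact h.1 (D.delete_transfer e hdel (h.2 _ (D.proper_delete e hdel)))
            · exact hacy _ _ ⟨f, rfl, rfl⟩ (w4.trans w2)
          · exact hacy _ _ ⟨f, rfl, rfl⟩ (w1.trans w3)
        · -- k' = head e, k = head e
          exact hacy _ _ ⟨f, rfl, rfl⟩ (w1.trans w2)
  · -- Part 2 : contracting the edges at a source or a sink
    intro v hv
    by_contra hnot
    obtain ⟨f, hfA, w⟩ := D.cyc_lift {e : D.E | D.tail e = v ∨ D.head e = v} hnot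
    set A : Set D.E := {e : D.E | D.tail e = v ∨ D.head e = v} with hAdef
    set K : Set D.V := {x | x = v ∨ ∃ g ∈ A, D.tail g = x ∨ D.head g = x} with hKdef
    have hK : ∀ g ∈ A, D.tail g ∈ K ∧ D.head g ∈ K := fun g hg =>
      ⟨Or.inr ⟨g, hg, Or.inl rfl⟩, Or.inr ⟨g, hg, Or.inr rfl⟩⟩
    rcases D.reach' hK w with hw | ⟨⟨k', hk', w1⟩, ⟨k, hk, w2⟩⟩
    · exact hacy _ _ ⟨f, rfl, rfl⟩ hw
    rcases hv with hsrc | hsnk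
    · -- v is a source
      have hAv : ∀ g ∈ A, D.tail g = v := fun g hg => hg.resolve_right (hsrc g)
      have hreach : ∀ k ∈ K, ReflTransGen D.dstep v k := by
        rintro k (rfl | ⟨g, hg, rfl | rfl⟩)
        · exact .refl
        · rw [hAv g hg]
        · exact ReflTransGen.single ⟨g, hAv g hg, rfl⟩
      have wv : ReflTransGen D.dstep v (D.tail f) := (hreach k hk).trans w2
      rcases hk' with rfl | ⟨g, hg, hgk | hgk⟩
      · -- k' = v
        exact hacy _ _ ⟨f, rfl, rfl⟩ (w1.trans wv)
      · -- k' = tail g = v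
        have hkv : k' = v := by rw [← hgk, hAv g hg]
        subst hkv
        exact hacy _ _ ⟨f, rfl, rfl⟩ (w1.trans wv)
      · -- k' = head g with tail g = v
        subst hgk
        have htg := hAv g hg
        rcases D.avoidAux g wv with p1 | ⟨-, w3⟩
        · rcases D.avoidAux g w1 with p2 | ⟨w4, -⟩
          · have hfg : f ≠ g := fun hq => hfA (hq ▸ hg)
            have hne : D.tail g ≠ D.head g := by
              rw [htg]
              exact fun hq => hsrc g hq.symm
            have hdel : D.Deletable g :=
              ⟨hne, by rw [htg]; exact (p1.tail ⟨f, hfg, rfl, rfl⟩).trans p2⟩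
            exact h.1 (D.delete_transfer g hdel (h.2 _ (D.proper_delete g hdel)))
          · have : ReflTransGen D.dstep (D.tail g) (D.tail f) := by rw [htg]; exact wv
            exact hacy _ _ ⟨f, rfl, rfl⟩ (w4.trans this)
        · exact hacy _ _ ⟨f, rfl, rfl⟩ (w1.trans w3)
    · -- v is a sink
      have hAv : ∀ g ∈ A, D.head g = v := fun g hg => hg.resolve_left (hsnk g)
      have hreach : ∀ k ∈ K, ReflTransGen D.dstep k v := by
        rintro k (rfl | ⟨g, hg, rfl | rfl⟩)
        · exact .refl
        · exact ReflTransGen.single ⟨g, rfl, hAv g hg⟩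
        · rw [hAv g hg]
      have hnov : ∀ y, ReflTransGen D.dstep v y → y = v := by
        intro y hy
        rcases hy.cases_head with heq | ⟨c, ⟨g', hg1, -⟩, -⟩
        · exact heq.symm
        · exact absurd hg1 (hsnk g')
      have wv1 : ReflTransGen D.dstep (D.head f) v := w1.trans (hreach k' hk')
      rcases hk with rfl | ⟨g, hg, hgk | hgk⟩
      · -- k = v
        exact hfA (Or.inl (hnov _ w2))
      · -- k = tail g with head g = v
        subst hgk
        have hhg := hAv g hg
        rcases D.avoidAux g w2 with p1 | ⟨-, w3⟩
        · rcases D.avoidAux g wv1 with p2 | ⟨w4, -⟩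
          · have hfg : f ≠ g := fun hq => hfA (hq ▸ hg)
            have hne : D.tail g ≠ D.head g := by
              rw [hhg]
              exact hsnk g
            have hdel : D.Deletable g :=
              ⟨hne, by rw [hhg]; exact (p1.tail ⟨f, hfg, rfl, rfl⟩).trans p2⟩
            exact h.1 (D.delete_transfer g hdel (h.2 _ (D.proper_delete g hdel)))
          · exact hacy _ _ ⟨f, rfl, rfl⟩ (w4.trans w2)
        · have : ReflTransGen D.dstep v (D.tail f) := by rw [← hhg]; exact w3
          exact hfA (Or.inl (hnov _ this))
      · -- k = head g = v
        have hkv : k = v := by rw [← hgk, hAv g hg]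
        rw [hkv] at w2
        exact hfA (Or.inl (hnov _ w2))
end
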